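/- arXiv:2501.13358 — 12 statements merged into one kernel-verified Lean document; each statement's English description precedes it below -/
import Mathlib

section
/- For all v, v', m, m' ∈ [0,1], one has |m − m'| ≤ 2 · sup_{b ∈ [0,1]} |r(b; v, m) − r(b; v', m')|, where r(b; v, m) = (v − b)·𝟙[b ≥ m]. -/
/-- First-price auction reward: `r(b; v, m) = (v - b) · 1[b ≥ m]`. -/
noncomputable def fpaReward (b v m : ℝ) : ℝ := if m ≤ b then v - b else 0

lemma fpa_abs_le (b v m : ℝ) (hb : b ∈ Set.Icc (0:ℝ) 1) (hv : v ∈ Set.Icc (0:ℝ) 1) :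
    |fpaReward b v m| ≤ 1 := by
  obtain ⟨hb0, hb1⟩ := hb
  obtain ⟨hv0, hv1⟩ := hv
  unfold fpaReward
  split <;> rw [abs_le] <;> constructor <;> linarith

lemma fpa_aux (v v' m m' : ℝ) (hv : v ∈ Set.Icc (0:ℝ) 1) (hv' : v' ∈ Set.Icc (0:ℝ) 1)
    (hm : m ∈ Set.Icc (0:ℝ) 1) (hm' : m' ∈ Set.Icc (0:ℝ) 1) (hmm : m ≤ m') :
    m' - m ≤ 2 * ⨆ b ∈ Set.Icc (0:ℝ) 1, |fpaReward b v m - fpaReward b v' m'| := by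
  set S := ⨆ b ∈ Set.Icc (0:ℝ) 1, |fpaReward b v m - fpaReward b v' m'| with hS
  have hbdd : BddAbove (Set.range fun b =>
      ⨆ _ : b ∈ Set.Icc (0:ℝ) 1, |fpaReward b v m - fpaReward b v' m'|) := by
    refine ⟨2, ?_⟩
    rintro x ⟨b, rfl⟩
    refine Real.iSup_le (fun hb => ?_) (by norm_num)
    calc |fpaReward b v m - fpaReward b v' m'|
        ≤ |fpaReward b v m| + |fpaReward b v' m'| := abs_sub _ _
      _ ≤ 1 + 1 := add_le_add (fpa_abs_le b v m hb hv) (fpa_abs_le b v' m' hb hv')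
      _ = 2 := by norm_num
  have hle : ∀ b ∈ Set.Icc (0:ℝ) 1, |fpaReward b v m - fpaReward b v' m'| ≤ S := by
    intro b hb
    refine le_ciSup_of_le hbdd b ?_
    rw [ciSup_pos hb]
  obtain ⟨hm0, hm1⟩ := hm
  obtain ⟨hm'0, hm'1⟩ := hm'
  have hS0 : 0 ≤ S := le_trans (abs_nonneg _) (hle 0 (by constructor <;> norm_num))
  rcases eq_or_lt_of_le hmm with rfl | hlt
  · linarith
  · refine le_of_forall_pos_le_add (fun ε hε => ?_)
    set b := max m (m' - ε) with hb
    have hbm : m ≤ b := le_max_left _ _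
    have hbm' : b < m' := max_lt hlt (by linarith)
    have hbIcc : b ∈ Set.Icc (0:ℝ) 1 := ⟨le_trans hm0 hbm, by linarith⟩
    have h1 : |fpaReward b v m - fpaReward b v' m'| = |v - b| := by
      unfold fpaReward
      rw [if_pos hbm, if_neg (not_le.mpr hbm'), sub_zero]
    have h2 : |fpaReward m v m - fpaReward m v' m'| = |v - m| := by
      unfold fpaReward
      rw [if_pos le_rfl, if_neg (not_le.mpr hlt), sub_zero]
    have k1 := hle b hbIcc
    have k2 := hle m ⟨hm0, hm1⟩
    rw [h1] at k1
    rw [h2] at k2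
    have hbv : b - m ≤ |v - b| + |v - m| := by
      have := abs_sub_abs_le_abs_sub (v - m) (v - b)
      have h3 : |(v - m) - (v - b)| = |b - m| := by rw [show (v - m) - (v - b) = b - m by ring]
      have h4 : b - m ≤ |b - m| := le_abs_self _
      calc b - m ≤ |b - m| := h4
        _ = |(v - b) - (v - m)| := by rw [show (v - b) - (v - m) = -(b - m) by ring, abs_neg]
        _ ≤ |v - b| + |v - m| := abs_sub _ _
    have hbε : m' - ε ≤ b := le_max_right _ _
    linarith

/-- For all `v, v', m, m' ∈ [0,1]`,
`|m - m'| ≤ 2 · sup_{b ∈ [0,1]} |r(b; v, m) - r(b; v', m')|`. -/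
theorem abs_diff_le_two_mul_sup_abs_reward_diff
    (v v' m m' : ℝ) (hv : v ∈ Set.Icc (0:ℝ) 1) (hv' : v' ∈ Set.Icc (0:ℝ) 1)
    (hm : m ∈ Set.Icc (0:ℝ) 1) (hm' : m' ∈ Set.Icc (0:ℝ) 1) :
    |m - m'| ≤ 2 * ⨆ b ∈ Set.Icc (0:ℝ) 1, |fpaReward b v m - fpaReward b v' m'| := by
  rcases le_total m m' with h | h
  · rw [abs_sub_comm, abs_of_nonneg (by linarith)]
    exact fpa_aux v v' m m' hv hv' hm hm' h
  · rw [abs_of_nonneg (by linarith)]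
    have := fpa_aux v' v m' m hv' hv hm' hm h
    simpa [abs_sub_comm] using this
end

section
/- Let T be an even positive integer, let v_t = 1 for all t ∈ {1,…,T}, and let m_t = 0 for 1 ≤ t ≤ T/2 and m_t = 1/2 for T/2 < t ≤ T. Then Σ_{t=1}^T max{v_t − m_t, 0} − sup_{b ∈ [0,1]} Σ_{t=1}^T r(b; v_t, m_t) = T/4; in particular, the dynamic benchmark exceeds the best fixed bid's cumulative reward by T/4. -/
/-- With `v_t ≡ 1`, `m_t = 0` for `1 ≤ t ≤ T/2` and `m_t = 1/2` for `T/2 < t ≤ T`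
(`T` even and positive), the dynamic benchmark exceeds the best fixed bid's
cumulative reward by exactly `T/4`. -/
theorem dynamic_benchmark_exceeds_static
    (T : ℕ) (hT : 0 < T) (hTeven : Even T) (v m : ℕ → ℝ)
    (hv : ∀ t, v t = 1)
    (hm₀ : ∀ t, 1 ≤ t → t ≤ T / 2 → m t = 0)
    (hm₁ : ∀ t, T / 2 < t → t ≤ T → m t = 1 / 2) :
    (∑ t ∈ Finset.Icc 1 T, max (v t - m t) 0) -
      (⨆ b ∈ Set.Icc (0:ℝ) 1, ∑ t ∈ Finset.Icc 1 T, fpaReward b (v t) (m t)) =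
      (T : ℝ) / 4 := by
  obtain ⟨N, hN⟩ := hTeven
  subst hN
  have hN1 : 1 ≤ N := by omega
  have hdiv : (N + N) / 2 = N := by omega
  simp only [hdiv] at hm₀ hm₁
  set g : ℝ → ℝ := fun b => ∑ t ∈ Finset.Icc 1 (N + N), fpaReward b (v t) (m t) with hg_def
  have hsplit : ∀ f : ℕ → ℝ, ∑ t ∈ Finset.Icc 1 (N + N), f t =
      ∑ t ∈ Finset.Ioc 0 N, f t + ∑ t ∈ Finset.Ioc N (N + N), f t := by
    intro f
    rw [show (1 : ℕ) = 0 + 1 from rfl, Finset.Icc_add_one_left_eq_Ioc]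
    exact (Finset.sum_Ioc_consecutive f (by omega) (by omega)).symm
  have hcard1 : (Finset.Ioc 0 N).card = N := by rw [Nat.card_Ioc]; omega
  have hcard2 : (Finset.Ioc N (N + N)).card = N := by rw [Nat.card_Ioc]; omega
  -- benchmark value
  have hbench : ∑ t ∈ Finset.Icc 1 (N + N), max (v t - m t) 0 = (N : ℝ) + N / 2 := by
    rw [hsplit]
    have h1 : ∑ t ∈ Finset.Ioc 0 N, max (v t - m t) 0 = (N : ℝ) := by
      have hc : ∀ t ∈ Finset.Ioc 0 N, max (v t - m t) 0 = (1:ℝ) := by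
        intro t ht
        rw [Finset.mem_Ioc] at ht
        rw [hv t, hm₀ t (by omega) ht.2]
        norm_num
      rw [Finset.sum_congr rfl hc, Finset.sum_const, hcard1, nsmul_eq_mul, mul_one]
    have h2 : ∑ t ∈ Finset.Ioc N (N + N), max (v t - m t) 0 = (N : ℝ) / 2 := by
      have hc : ∀ t ∈ Finset.Ioc N (N + N), max (v t - m t) 0 = (1:ℝ)/2 := by
        intro t ht
        rw [Finset.mem_Ioc] at ht
        rw [hv t, hm₁ t ht.1 ht.2]
        norm_num
      rw [Finset.sum_congr rfl hc, Finset.sum_const, hcard2, nsmul_eq_mul]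
      ring
    rw [h1, h2]
  -- value of g on [0,1]
  have hg : ∀ b ∈ Set.Icc (0:ℝ) 1,
      g b = (N : ℝ) * (1 - b) + (N : ℝ) * (if (1:ℝ)/2 ≤ b then 1 - b else 0) := by
    intro b hb
    rw [hg_def]
    simp only
    rw [hsplit]
    have h1 : ∑ t ∈ Finset.Ioc 0 N, fpaReward b (v t) (m t) = (N : ℝ) * (1 - b) := by
      have hc : ∀ t ∈ Finset.Ioc 0 N, fpaReward b (v t) (m t) = 1 - b := by
        intro t ht
        rw [Finset.mem_Ioc] at ht
        rw [hv t, hm₀ t (by omega) ht.2, fpaReward, if_pos hb.1]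
      rw [Finset.sum_congr rfl hc, Finset.sum_const, hcard1, nsmul_eq_mul]
    have h2 : ∑ t ∈ Finset.Ioc N (N + N), fpaReward b (v t) (m t) =
        (N : ℝ) * (if (1:ℝ)/2 ≤ b then 1 - b else 0) := by
      have hc : ∀ t ∈ Finset.Ioc N (N + N),
          fpaReward b (v t) (m t) = if (1:ℝ)/2 ≤ b then 1 - b else 0 := by
        intro t ht
        rw [Finset.mem_Ioc] at ht
        rw [hv t, hm₁ t ht.1 ht.2, fpaReward]
      rw [Finset.sum_congr rfl hc, Finset.sum_const, hcard2, nsmul_eq_mul]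
    rw [h1, h2]
  -- upper bound
  have hub : ∀ b : ℝ, (⨆ _ : b ∈ Set.Icc (0:ℝ) 1, g b) ≤ (N : ℝ) := by
    intro b
    by_cases hb : b ∈ Set.Icc (0:ℝ) 1
    · rw [ciSup_pos hb, hg b hb]
      have hb0 := hb.1
      have hb1 := hb.2
      by_cases hhalf : (1:ℝ)/2 ≤ b
      · rw [if_pos hhalf]
        have : (0:ℝ) ≤ N := Nat.cast_nonneg N
        nlinarith
      · rw [if_neg hhalf]
        have : (0:ℝ) ≤ N := Nat.cast_nonneg N
        nlinarith
    · exact Real.iSup_le (fun h => absurd h hb) (Nat.cast_nonneg N)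
  have hbdd : BddAbove (Set.range fun b => ⨆ _ : b ∈ Set.Icc (0:ℝ) 1, g b) := by
    refine ⟨(N : ℝ), ?_⟩
    rintro x ⟨b, rfl⟩
    exact hub b
  have h0mem : (0:ℝ) ∈ Set.Icc (0:ℝ) 1 := ⟨le_refl 0, zero_le_one⟩
  have hg0 : g 0 = (N : ℝ) := by
    rw [hg 0 h0mem, if_neg (by norm_num)]
    ring
  have hsup : (⨆ b ∈ Set.Icc (0:ℝ) 1, g b) = (N : ℝ) := by
    apply le_antisymm
    · exact Real.iSup_le hub (Nat.cast_nonneg N)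
    · have h := le_ciSup hbdd (0:ℝ)
      rwa [ciSup_pos h0mem, hg0] at h
  rw [hbench, hsup]
  push_cast
  ring
end

section
/- Let T ≥ 2 be an integer, ε ∈ (0,1], v_t = 1 for all t ∈ {1,…,T}, and m_t = 0 when t is odd and m_t = ε when t is even. Then Σ_{t=2}^T |m_t − m_{t−1}| = (T−1)·ε, while Σ_{t=2}^T sup_{b ∈ [0,1]} |r(b; v_t, m_t) − r(b; v_{t−1}, m_{t−1})| = T − 1. -/
lemma fpa_sup_aux (ε : ℝ) (hε : ε ∈ Set.Ioc (0:ℝ) 1) (a c : ℝ)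
    (hac : (a = 0 ∧ c = ε) ∨ (a = ε ∧ c = 0)) :
    (⨆ b ∈ Set.Icc (0:ℝ) 1, |fpaReward b 1 a - fpaReward b 1 c|) = 1 := by
  obtain ⟨hε0, hε1⟩ := hε
  have key : ∀ b ∈ Set.Icc (0:ℝ) 1, |fpaReward b 1 a - fpaReward b 1 c| ≤ 1 := by
    rintro b ⟨hb0, hb1⟩
    rcases hac with ⟨ha, hc⟩ | ⟨ha, hc⟩ <;> subst ha <;> subst hc <;>
      simp only [fpaReward] <;> split_ifs <;>
      simp_all <;> rw [abs_le] <;> constructor <;> linarith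
  have h0 : |fpaReward 0 1 a - fpaReward 0 1 c| = 1 := by
    rcases hac with ⟨ha, hc⟩ | ⟨ha, hc⟩ <;> subst ha <;> subst hc <;>
      simp [fpaReward, hε0.not_ge, abs_of_nonneg]
  have hbdd : BddAbove (Set.range fun b =>
      ⨆ _ : b ∈ Set.Icc (0:ℝ) 1, |fpaReward b 1 a - fpaReward b 1 c|) := by
    refine ⟨1, ?_⟩
    rintro x ⟨b, rfl⟩
    exact Real.iSup_le (fun hb => key b hb) zero_le_one
  apply le_antisymm
  · exact Real.iSup_le (fun b => Real.iSup_le (fun hb => key b hb) zero_le_one) zero_le_one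
  · refine le_ciSup_of_le hbdd 0 ?_
    rw [ciSup_pos (by constructor <;> norm_num : (0:ℝ) ∈ Set.Icc (0:ℝ) 1)]
    rw [h0]

/-- With `v_t ≡ 1`, `m_t = 0` for odd `t` and `m_t = ε` for even `t` (`ε ∈ (0,1]`),
the temporal variation `Σ_{t=2}^T |m_t - m_{t-1}|` equals `(T-1)·ε`, while
`Σ_{t=2}^T sup_{b ∈ [0,1]} |r(b; v_t, m_t) - r(b; v_{t-1}, m_{t-1})|` equals `T - 1`. -/
theorem variation_vs_reward_variation_example
    (T : ℕ) (hT : 2 ≤ T) (ε : ℝ) (hε : ε ∈ Set.Ioc (0:ℝ) 1) (v m : ℕ → ℝ)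
    (hv : ∀ t, v t = 1)
    (hmodd : ∀ t, Odd t → m t = 0)
    (hmeven : ∀ t, Even t → m t = ε) :
    (∑ t ∈ Finset.Icc 2 T, |m t - m (t - 1)|) = ((T : ℝ) - 1) * ε ∧
    (∑ t ∈ Finset.Icc 2 T,
        ⨆ b ∈ Set.Icc (0:ℝ) 1,
          |fpaReward b (v t) (m t) - fpaReward b (v (t - 1)) (m (t - 1))|) =
      (T : ℝ) - 1 := by
  have hmem : ∀ t ∈ Finset.Icc 2 T,
      (m t = 0 ∧ m (t-1) = ε) ∨ (m t = ε ∧ m (t-1) = 0) := by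
    intro t ht
    have h2 : 2 ≤ t := (Finset.mem_Icc.mp ht).1
    rcases Nat.even_or_odd t with he | ho
    · right
      exact ⟨hmeven t he, hmodd (t-1) (Nat.Even.sub_odd (by omega) he odd_one)⟩
    · left
      exact ⟨hmodd t ho, hmeven (t-1) (Nat.Odd.sub_odd ho odd_one)⟩
  have hcard : ((Finset.Icc 2 T).card : ℝ) = (T : ℝ) - 1 := by
    rw [Nat.card_Icc]
    have : T + 1 - 2 = T - 1 := by omega
    rw [this, Nat.cast_sub (by omega)]
    norm_num
  constructor
  · rw [Finset.sum_congr rfl (g := fun _ => ε) (fun t ht => by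
      rcases hmem t ht with ⟨h1, h2⟩ | ⟨h1, h2⟩ <;> rw [h1, h2] <;>
        simp [abs_of_nonneg, abs_of_nonpos, hε.1.le, neg_nonpos.mpr hε.1.le])]
    rw [Finset.sum_const, nsmul_eq_mul, hcard]
  · rw [Finset.sum_congr rfl (g := fun _ => (1:ℝ)) (fun t ht => by
      rw [hv t, hv (t-1)]
      exact fpa_sup_aux ε hε _ _ (hmem t ht))]
    rw [Finset.sum_const, nsmul_eq_mul, hcard, mul_one]
end

section
/- Let T ≥ 2 be an integer, c ∈ [0,1], m_t = c for all t ∈ {1,…,T}, and v_t = 0 when t is odd and v_t = 1 when t is even. Then Σ_{t=2}^T |m_t − m_{t−1}| = 0, while Σ_{t=2}^T sup_{b ∈ [0,1]} |r(b; v_t, m_t) − r(b; v_{t−1}, m_{t−1})| = T − 1. -/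
lemma fpa_abs_diff (b c : ℝ) :
    |fpaReward b 1 c - fpaReward b 0 c| = if c ≤ b then 1 else 0 := by
  unfold fpaReward
  by_cases h : c ≤ b <;> simp [h]

lemma key (c : ℝ) (hc : c ∈ Set.Icc (0:ℝ) 1) :
    (⨆ b ∈ Set.Icc (0:ℝ) 1, |fpaReward b 1 c - fpaReward b 0 c|) = 1 := by
  have hbound : ∀ b : ℝ,
      (⨆ _ : b ∈ Set.Icc (0:ℝ) 1, |fpaReward b 1 c - fpaReward b 0 c|) ≤ 1 := by
    intro b
    apply Real.iSup_le _ one_pos.le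
    intro _
    rw [fpa_abs_diff]
    split <;> norm_num
  apply le_antisymm
  · exact Real.iSup_le hbound one_pos.le
  · have h1 : (1:ℝ) ∈ Set.Icc (0:ℝ) 1 := by norm_num
    have := le_ciSup (f := fun b =>
        ⨆ _ : b ∈ Set.Icc (0:ℝ) 1, |fpaReward b 1 c - fpaReward b 0 c|)
      ⟨1, by rintro x ⟨b, rfl⟩; exact hbound b⟩ (1:ℝ)
    refine le_trans ?_ this
    rw [ciSup_pos h1, fpa_abs_diff, if_pos hc.2]

/-- With `m_t ≡ c ∈ [0,1]`, `v_t = 0` for odd `t` and `v_t = 1` for even `t`,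
the temporal variation `Σ_{t=2}^T |m_t - m_{t-1}|` is `0`, while
`Σ_{t=2}^T sup_{b ∈ [0,1]} |r(b; v_t, m_t) - r(b; v_{t-1}, m_{t-1})|` equals `T - 1`. -/
theorem zero_variation_vs_reward_variation_example
    (T : ℕ) (hT : 2 ≤ T) (c : ℝ) (hc : c ∈ Set.Icc (0:ℝ) 1) (v m : ℕ → ℝ)
    (hm : ∀ t, m t = c)
    (hvodd : ∀ t, Odd t → v t = 0)
    (hveven : ∀ t, Even t → v t = 1) :
    (∑ t ∈ Finset.Icc 2 T, |m t - m (t - 1)|) = 0 ∧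
    (∑ t ∈ Finset.Icc 2 T,
        ⨆ b ∈ Set.Icc (0:ℝ) 1,
          |fpaReward b (v t) (m t) - fpaReward b (v (t - 1)) (m (t - 1))|) =
      (T : ℝ) - 1 := by
  constructor
  · apply Finset.sum_eq_zero
    intro t _
    simp [hm]
  · have hterm : ∀ t ∈ Finset.Icc 2 T,
        (⨆ b ∈ Set.Icc (0:ℝ) 1,
          |fpaReward b (v t) (m t) - fpaReward b (v (t - 1)) (m (t - 1))|) = 1 := by
      intro t ht
      have ht2 : 2 ≤ t := (Finset.mem_Icc.mp ht).1
      rcases Nat.even_or_odd t with he | ho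
      · have ho' : Odd (t - 1) := Nat.Even.sub_odd (le_trans one_le_two ht2) he odd_one
        rw [hveven t he, hvodd _ ho', hm, hm]
        exact key c hc
      · have he' : Even (t - 1) := Nat.Odd.sub_odd ho odd_one
        rw [hvodd t ho, hveven _ he', hm, hm]
        have hswap : ∀ b : ℝ, |fpaReward b 0 c - fpaReward b 1 c|
            = |fpaReward b 1 c - fpaReward b 0 c| := fun b => abs_sub_comm _ _
        simp only [hswap]
        exact key c hc
    rw [Finset.sum_congr rfl hterm, Finset.sum_const, Nat.card_Icc, nsmul_eq_mul, mul_one]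
    have : T + 1 - 2 = T - 1 := by omega
    rw [this, Nat.cast_sub (le_trans one_le_two hT)]
    norm_num
end

section
/- For every integer n ≥ 1 and every sequence (v_t, m_t)_{t=1}^n ⊂ [0,1]^2, there exists τ ∈ [0,1] such that Σ_{t=1}^n max{v_t − m_t, 0} − Σ_{t=1}^n r(min{v_t, τ}; v_t, m_t) ≤ n · Σ_{t=2}^n |m_t − m_{t−1}|; that is, within a batch the transition cost from the best policy of the form f(v; τ) = min{v, τ} to the dynamic benchmark is at most the batch length times the temporal variation of the opponents' highest bid sequence. -/
/-- Telescoping bound: `|m b - m a| ≤ ∑_{k=a+1}^b |m k - m (k-1)|`. -/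
lemma tele (m : ℕ → ℝ) : ∀ a b : ℕ, a ≤ b →
    |m b - m a| ≤ ∑ k ∈ Finset.Icc (a+1) b, |m k - m (k-1)| := by
  intro a b hab
  induction b, hab using Nat.le_induction with
  | base => simp
  | succ b hb ih =>
      rw [Finset.sum_Icc_succ_top (by omega : a + 1 ≤ b + 1)]
      have h1 : |m (b+1) - m a| ≤ |m (b+1) - m b| + |m b - m a| := by
        have := abs_sub_le (m (b+1)) (m b) (m a); linarith
      have h2 : (b + 1 : ℕ) - 1 = b := by omega
      rw [h2]
      linarith

/-- Within a batch of length `n`, the transition cost from the best thresholded policy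
`f(v; τ) = min {v, τ}` to the dynamic benchmark is at most the batch length times the
temporal variation of the opponents' highest bid sequence. -/
theorem transition_cost_le_length_mul_variation
    (n : ℕ) (hn : 1 ≤ n) (v m : ℕ → ℝ)
    (hv : ∀ t, 1 ≤ t → t ≤ n → v t ∈ Set.Icc (0:ℝ) 1)
    (hm : ∀ t, 1 ≤ t → t ≤ n → m t ∈ Set.Icc (0:ℝ) 1) :
    ∃ τ ∈ Set.Icc (0:ℝ) 1,
      (∑ t ∈ Finset.Icc 1 n, max (v t - m t) 0) -
          (∑ t ∈ Finset.Icc 1 n, fpaReward (min (v t) τ) (v t) (m t)) ≤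
        (n : ℝ) * ∑ t ∈ Finset.Icc 2 n, |m t - m (t - 1)| := by
  have hne : (Finset.Icc 1 n).Nonempty := ⟨1, by simp [hn]⟩
  obtain ⟨t0, ht0, hτeq⟩ := Finset.exists_mem_eq_sup' hne m
  obtain ⟨ht01, ht0n⟩ := Finset.mem_Icc.mp ht0
  set τ := (Finset.Icc 1 n).sup' hne m with hτdef
  set V := ∑ t ∈ Finset.Icc 2 n, |m t - m (t-1)| with hVdef
  have hVnn : 0 ≤ V := Finset.sum_nonneg fun _ _ => abs_nonneg _
  refine ⟨τ, ⟨?_, ?_⟩, ?_⟩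
  · rw [hτeq]; exact (hm t0 ht01 ht0n).1
  · exact Finset.sup'_le hne m fun t ht => by
      obtain ⟨h1, h2⟩ := Finset.mem_Icc.mp ht
      exact (hm t h1 h2).2
  · have key : ∀ t ∈ Finset.Icc 1 n,
        max (v t - m t) 0 - fpaReward (min (v t) τ) (v t) (m t) ≤ V := by
      intro t ht
      obtain ⟨ht1, htn⟩ := Finset.mem_Icc.mp ht
      have hmτ : m t ≤ τ := Finset.le_sup' m ht
      have step1 : max (v t - m t) 0 - fpaReward (min (v t) τ) (v t) (m t) ≤ τ - m t := by
        unfold fpaReward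
        rcases le_total τ (v t) with h | h
        · rw [min_eq_right h, if_pos hmτ]
          have hmax : max (v t - m t) 0 = v t - m t := max_eq_left (by linarith)
          rw [hmax]; linarith
        · rw [min_eq_left h]
          split_ifs with h2
          · have : max (v t - m t) 0 ≤ τ - m t :=
              max_le (by linarith) (by linarith)
            linarith
          · have : max (v t - m t) 0 ≤ τ - m t :=
              max_le (by linarith) (by linarith)
            linarith
      have step2 : τ - m t ≤ V := by
        have habs : τ - m t ≤ |m t0 - m t| := by
          rw [hτeq]; exact le_abs_self _
        rcases le_total t t0 with h | h
        · have := tele m t t0 h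
          have hsub : Finset.Icc (t+1) t0 ⊆ Finset.Icc 2 n := by
            intro k hk; simp only [Finset.mem_Icc] at *; omega
          have hle : ∑ k ∈ Finset.Icc (t+1) t0, |m k - m (k-1)| ≤ V :=
            Finset.sum_le_sum_of_subset_of_nonneg hsub (fun _ _ _ => abs_nonneg _)
          linarith
        · have h3 := tele m t0 t h
          rw [abs_sub_comm] at habs
          have hsub : Finset.Icc (t0+1) t ⊆ Finset.Icc 2 n := by
            intro k hk; simp only [Finset.mem_Icc] at *; omega
          have hle : ∑ k ∈ Finset.Icc (t0+1) t, |m k - m (k-1)| ≤ V :=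
            Finset.sum_le_sum_of_subset_of_nonneg hsub (fun _ _ _ => abs_nonneg _)
          linarith
      linarith
    have := Finset.sum_le_sum key
    rw [Finset.sum_sub_distrib] at this
    have hcard : ((Finset.Icc 1 n).card : ℝ) = (n : ℝ) := by
      rw [Nat.card_Icc]; norm_num
    rw [Finset.sum_const, nsmul_eq_mul, hcard] at this
    exact this
end

section
/- For every integer n ≥ 1 and every sequence (v_t, m_t)_{t=1}^n ⊂ [0,1]^2 such that m_1 = m_2 = ⋯ = m_{n−1} (the opponents' highest bid is constant except possibly at the last round), there exists τ ∈ [0,1] such that Σ_{t=1}^n max{v_t − m_t, 0} − Σ_{t=1}^n r(min{v_t, τ}; v_t, m_t) ≤ 1; that is, the transition cost over a batch containing at most one switch, occurring at its last round, is at most 1. -/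
/-- Within a batch of length `n` in which the opponents' highest bid is constant except
possibly at the last round, the transition cost from the best thresholded policy
`f(v; τ) = min {v, τ}` to the dynamic benchmark is at most `1`. -/
theorem transition_cost_le_one_of_single_switch
    (n : ℕ) (hn : 1 ≤ n) (v m : ℕ → ℝ)
    (hv : ∀ t, 1 ≤ t → t ≤ n → v t ∈ Set.Icc (0:ℝ) 1)
    (hm : ∀ t, 1 ≤ t → t ≤ n → m t ∈ Set.Icc (0:ℝ) 1)
    (hconst : ∀ s, 1 ≤ s → s ≤ n - 1 → m s = m 1) :
    ∃ τ ∈ Set.Icc (0:ℝ) 1,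
      (∑ t ∈ Finset.Icc 1 n, max (v t - m t) 0) -
          (∑ t ∈ Finset.Icc 1 n, fpaReward (min (v t) τ) (v t) (m t)) ≤ 1 := by
  refine ⟨m 1, hm 1 le_rfl hn, ?_⟩
  rw [← Finset.sum_sub_distrib]
  have key : ∀ t ∈ Finset.Icc 1 n,
      max (v t - m t) 0 - fpaReward (min (v t) (m 1)) (v t) (m t)
        ≤ if t = n then (1:ℝ) else 0 := by
    intro t ht
    simp only [Finset.mem_Icc] at ht
    by_cases htn : t = n
    · subst htn
      rw [if_pos rfl]
      have h1 := hv t ht.1 ht.2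
      have h2 := hm t ht.1 ht.2
      simp only [Set.mem_Icc] at h1 h2
      have hmax : max (v t - m t) 0 ≤ 1 := by
        apply max_le <;> linarith
      have hr : 0 ≤ fpaReward (min (v t) (m 1)) (v t) (m t) := by
        unfold fpaReward
        split
        · have := min_le_left (v t) (m 1); linarith
        · exact le_rfl
      linarith
    · simp only [if_neg htn]
      have hle : t ≤ n - 1 := by omega
      have hmt : m t = m 1 := hconst t ht.1 hle
      unfold fpaReward
      rcases le_or_gt (m 1) (v t) with h | h
      · rw [min_eq_right h, if_pos (by rw [hmt])]
        have : max (v t - m t) 0 = v t - m 1 := by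
          rw [hmt]; exact max_eq_left (by linarith)
        rw [this]; ring_nf; simp [hmt]
      · rw [min_eq_left h.le, if_neg (by rw [hmt]; linarith)]
        have : max (v t - m t) 0 = 0 := max_eq_right (by rw [hmt]; linarith)
        simp [this]
  calc (∑ t ∈ Finset.Icc 1 n,
          (max (v t - m t) 0 - fpaReward (min (v t) (m 1)) (v t) (m t)))
      ≤ ∑ t ∈ Finset.Icc 1 n, (if t = n then (1:ℝ) else 0) :=
        Finset.sum_le_sum key
    _ = 1 := by
        rw [Finset.sum_ite_eq' (Finset.Icc 1 n) n (fun _ => (1:ℝ))]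
        simp [hn]
end

section
/- Let H ≥ 2 be an integer. For each τ ∈ {1,…,H} define the H-round instance v_t = 1 for all t and m_t^τ = 0 for t < τ, m_t^τ = 1/H for τ ≤ t ≤ H. Then for every randomized bidding policy π over H rounds, the average over τ drawn uniformly from {1,…,H} of the expected dynamic regret of π on the instance (v_t, m_t^τ)_{t=1}^H is at least 1/2 − 1/(2H). -/
/-- A randomized bidding policy over `T` rounds: a probability space together with,
for each round `t`, a measurable map from (history of `(vₛ, mₛ)` for `s < t`, current
value `vₜ`, randomness `ω`) to a bid in `[0,1]`. Rounds are indexed `0, …, T-1`. -/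
structure BidPolicy (T : ℕ) where
  Ω : Type
  [instMS : MeasurableSpace Ω]
  μ : MeasureTheory.Measure Ω
  isProb : MeasureTheory.IsProbabilityMeasure μ
  bid : (t : ℕ) → (Fin t → ℝ × ℝ) → ℝ → Ω → ℝ
  bid_mem : ∀ t h v ω, bid t h v ω ∈ Set.Icc (0:ℝ) 1
  bid_measurable : ∀ t, Measurable fun p : (Fin t → ℝ × ℝ) × ℝ × Ω => bid t p.1 p.2.1 p.2.2

attribute [instance] BidPolicy.instMS

/-- The bid of the policy at round `t` on the sequence `(v, m)`, given randomness `ω`. -/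
noncomputable def BidPolicy.bids {T : ℕ} (π : BidPolicy T) (v m : ℕ → ℝ) (t : ℕ)
    (ω : π.Ω) : ℝ :=
  π.bid t (fun s : Fin t => (v s, m s)) (v t) ω

/-- Expected dynamic regret of a policy on the sequence `(v, m)` over `T` rounds. -/
noncomputable def BidPolicy.expRegret {T : ℕ} (π : BidPolicy T) (v m : ℕ → ℝ) : ℝ :=
  ∫ ω, (∑ t ∈ Finset.range T,
    (max (v t - m t) 0 - fpaReward (π.bids v m t ω) (v t) (m t))) ∂π.μ

/-- Temporal variation `Σ_{t=2}^T |m_t - m_{t-1}|` (rounds indexed `0, …, T-1`). -/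
noncomputable def totalVariation (m : ℕ → ℝ) (T : ℕ) : ℝ :=
  ∑ t ∈ Finset.range (T - 1), |m (t + 1) - m t|

/-- Number of switches `Σ_{t=2}^T 1[m_t ≠ m_{t-1}]` (rounds indexed `0, …, T-1`). -/
noncomputable def numSwitches (m : ℕ → ℝ) (T : ℕ) : ℝ :=
  ∑ t ∈ Finset.range (T - 1), if m (t + 1) ≠ m t then 1 else 0

lemma fpa_term_nonneg {b m : ℝ} (hb1 : b ≤ 1) :
    0 ≤ max (1 - m) 0 - fpaReward b 1 m := by
  unfold fpaReward
  split_ifs with h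
  · have h1 : 1 - b ≤ max (1 - m) 0 := le_max_of_le_left (by linarith)
    linarith
  · simp

lemma fpa_term_le_one {b m : ℝ} (hb1 : b ≤ 1) (hm : 0 ≤ m) :
    max (1 - m) 0 - fpaReward b 1 m ≤ 1 := by
  unfold fpaReward
  have h1 : max (1 - m) 0 ≤ 1 := max_le (by linarith) (by norm_num)
  split_ifs with h
  · linarith
  · linarith

lemma bids_measurable {T : ℕ} (π : BidPolicy T) (v m : ℕ → ℝ) (t : ℕ) :
    Measurable (π.bids v m t) :=
  (π.bid_measurable t).comp (measurable_const.prodMk (measurable_const.prodMk measurable_id))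

lemma bids_eq {T : ℕ} (π : BidPolicy T) (H t τ : ℕ) (ht : t + 1 ≤ τ) (ω : π.Ω) :
    π.bids (fun _ => 1) (fun s => if s + 1 < τ then 0 else 1 / (H : ℝ)) t ω
      = π.bid t (fun _ => (1, 0)) 1 ω := by
  unfold BidPolicy.bids
  congr 1
  funext s
  have hs : (s : ℕ) + 1 < τ := by have := s.isLt; omega
  simp [hs]

lemma term_integrable {T : ℕ} (π : BidPolicy T) (m : ℕ → ℝ) (t : ℕ)
    (hm0 : 0 ≤ m t) :
    MeasureTheory.Integrable
      (fun ω => max (1 - m t) 0 - fpaReward (π.bids (fun _ => 1) m t ω) 1 (m t)) π.μ := by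
  haveI := π.isProb
  have hB := bids_measurable π (fun _ => 1) m t
  have hg : Measurable fun b : ℝ => fpaReward b 1 (m t) := by
    unfold fpaReward
    exact Measurable.ite (measurableSet_le measurable_const measurable_id)
      (measurable_const.sub measurable_id) measurable_const
  have hmeas : Measurable fun ω => max (1 - m t) 0 - fpaReward (π.bids (fun _ => 1) m t ω) 1 (m t) :=
    measurable_const.sub (hg.comp hB)
  refine (MeasureTheory.integrable_const (1:ℝ)).mono'
    hmeas.aestronglyMeasurable (MeasureTheory.ae_of_all _ fun ω => ?_)
  have hb := π.bid_mem t (fun s : Fin t => ((fun _ => (1:ℝ)) (s:ℕ), m (s:ℕ))) 1 ω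
  have hb1 : π.bids (fun _ => 1) m t ω ≤ 1 := hb.2
  rw [Real.norm_eq_abs, abs_le]
  constructor
  · have := fpa_term_nonneg (m := m t) hb1
    linarith
  · exact fpa_term_le_one hb1 hm0

lemma gauss_sum (H : ℕ) (hH : 1 ≤ H) :
    ∑ t ∈ Finset.range H, ((H - 1 - t : ℕ) : ℝ) / H = ((H : ℝ) - 1) / 2 := by
  have h1 : ∑ t ∈ Finset.range H, ((H - 1 - t : ℕ) : ℝ) / H
      = ∑ t ∈ Finset.range H, ((t : ℕ) : ℝ) / H :=
    Finset.sum_range_reflect (fun j => ((j : ℕ) : ℝ) / H) H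
  rw [h1, ← Finset.sum_div]
  have h2 : ((∑ i ∈ Finset.range H, i : ℕ) : ℝ) * 2 = (H : ℝ) * ((H : ℝ) - 1) := by
    have := Finset.sum_range_id_mul_two H
    have h3 : (((∑ i ∈ Finset.range H, i) * 2 : ℕ) : ℝ) = ((H * (H - 1) : ℕ) : ℝ) := by
      exact_mod_cast congrArg (Nat.cast : ℕ → ℝ) this
    push_cast [Nat.cast_sub hH] at h3
    push_cast; linarith
  have hHpos : (0:ℝ) < H := by exact_mod_cast Nat.pos_of_ne_zero (by omega)
  push_cast
  rw [div_eq_iff (ne_of_gt hHpos)]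
  push_cast at h2
  nlinarith

lemma per_round_bound (H t : ℕ) (hH : 2 ≤ H) (ht : t < H) (b : ℝ)
    (hb0 : 0 ≤ b) (hb1 : b ≤ 1) :
    ((H - 1 - t : ℕ) : ℝ) / H ≤ ∑ τ ∈ Finset.Icc (t + 1) H,
      (max (1 - (if t + 1 < τ then 0 else 1 / (H : ℝ))) 0
        - fpaReward b 1 (if t + 1 < τ then 0 else 1 / (H : ℝ))) := by
  have hHpos : (0:ℝ) < H := by exact_mod_cast Nat.pos_of_ne_zero (by omega)
  have hH1 : (1:ℝ) / H ≤ 1 := by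
    rw [div_le_one hHpos]; exact_mod_cast Nat.one_le_iff_ne_zero.2 (by omega)
  have hsplit : Finset.Icc (t + 1) H = insert (t + 1) (Finset.Icc (t + 2) H) := by
    ext x; simp only [Finset.mem_Icc, Finset.mem_insert]; omega
  rw [hsplit, Finset.sum_insert (by simp [Finset.mem_Icc])]
  have h1 : ∀ τ ∈ Finset.Icc (t + 2) H,
      (max (1 - (if t + 1 < τ then 0 else 1 / (H : ℝ))) 0
        - fpaReward b 1 (if t + 1 < τ then 0 else 1 / (H : ℝ))) = b := by
    intro τ hτ
    rw [Finset.mem_Icc] at hτ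
    have hlt : t + 1 < τ := by omega
    simp only [hlt, if_true]
    unfold fpaReward
    rw [if_pos hb0]
    simp
  rw [Finset.sum_congr rfl h1, Finset.sum_const, Nat.card_Icc]
  have hcard : H + 1 - (t + 2) = H - 1 - t := by omega
  rw [hcard, nsmul_eq_mul]
  have hcast : ((H - 1 - t : ℕ) : ℝ) = (H : ℝ) - 1 - t := by
    rw [show H - 1 - t = H - (1 + t) by omega, Nat.cast_sub (by omega)]
    push_cast; ring
  rw [hcast]
  simp only [lt_irrefl, if_false, if_neg (lt_irrefl (t+1))]
  have hmax : max (1 - 1 / (H:ℝ)) 0 = 1 - 1 / H := max_eq_left (by linarith)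
  rw [hmax]
  unfold fpaReward
  have htH : (t : ℝ) ≤ (H : ℝ) - 1 := by
    have : (t:ℝ) + 1 ≤ H := by exact_mod_cast ht
    linarith
  set c : ℝ := (H : ℝ) - 1 - t with hc
  have hcnn : 0 ≤ c := by linarith
  by_cases hbc : 1 / (H : ℝ) ≤ b
  · rw [if_pos hbc]
    have h2 : c * (1 / (H:ℝ)) ≤ c * b := mul_le_mul_of_nonneg_left hbc hcnn
    have h3 : c / (H:ℝ) = c * (1 / H) := by ring
    linarith
  · rw [if_neg hbc]
    have h4 : c / (H:ℝ) ≤ ((H:ℝ) - 1) / H := by gcongr; linarith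
    have h5 : ((H:ℝ) - 1) / H = 1 - 1 / H := by field_simp
    have h6 : 0 ≤ c * b := mul_nonneg hcnn hb0
    rw [h5] at h4
    nlinarith [h4, h6]

/-- Lower-bound building block: with `v_t ≡ 1` and `m_t^τ = 0` for rounds before `τ`,
`m_t^τ = 1/H` from round `τ` on (rounds `1, …, H` here indexed `0, …, H-1`, so round
`t+1 < τ` means index `t` is before the jump), the average over `τ` uniform in
`{1, …, H}` of the expected dynamic regret of any policy is at least `1/2 - 1/(2H)`. -/
theorem single_jump_batch_lower_bound
    (H : ℕ) (hH : 2 ≤ H) (π : BidPolicy H) :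
    1 / 2 - 1 / (2 * (H : ℝ)) ≤
      (1 / (H : ℝ)) * ∑ τ ∈ Finset.Icc 1 H,
        π.expRegret (fun _ => 1) (fun t => if t + 1 < τ then 0 else 1 / (H : ℝ)) := by
  haveI := π.isProb
  have hHpos : (0:ℝ) < H := by exact_mod_cast Nat.pos_of_ne_zero (by omega)
  -- the τ-indexed m-sequences
  set M : ℕ → ℕ → ℝ := fun τ t => if t + 1 < τ then 0 else 1 / (H : ℝ) with hM
  have hM0 : ∀ τ t, 0 ≤ M τ t := by
    intro τ t; simp only [hM]; split_ifs
    · exact le_rfl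
    · positivity
  -- integrability of each instance's regret integrand
  have hint : ∀ τ ∈ Finset.Icc 1 H, MeasureTheory.Integrable
      (fun ω => ∑ t ∈ Finset.range H,
        (max ((1:ℝ) - M τ t) 0 - fpaReward (π.bids (fun _ => 1) (M τ) t ω) 1 (M τ t))) π.μ := by
    intro τ _
    exact MeasureTheory.integrable_finset_sum _ (fun t _ => term_integrable π (M τ) t (hM0 τ t))
  -- rewrite the sum of expected regrets as one integral
  have hswap : ∑ τ ∈ Finset.Icc 1 H, π.expRegret (fun _ => 1) (M τ)
      = ∫ ω, (∑ τ ∈ Finset.Icc 1 H, ∑ t ∈ Finset.range H,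
          (max ((1:ℝ) - M τ t) 0 - fpaReward (π.bids (fun _ => 1) (M τ) t ω) 1 (M τ t))) ∂π.μ := by
    rw [MeasureTheory.integral_finset_sum _ hint]
    rfl
  -- pointwise lower bound
  have hpt : ∀ ω : π.Ω, ((H:ℝ) - 1) / 2 ≤ ∑ τ ∈ Finset.Icc 1 H, ∑ t ∈ Finset.range H,
      (max ((1:ℝ) - M τ t) 0 - fpaReward (π.bids (fun _ => 1) (M τ) t ω) 1 (M τ t)) := by
    intro ω
    rw [Finset.sum_comm]
    rw [← gauss_sum H (by omega)]
    refine Finset.sum_le_sum fun t ht => ?_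
    rw [Finset.mem_range] at ht
    set b : ℝ := π.bid t (fun _ => (1, 0)) 1 ω with hb
    have hbmem := π.bid_mem t (fun _ => (1, 0)) 1 ω
    calc ((H - 1 - t : ℕ) : ℝ) / H
        ≤ ∑ τ ∈ Finset.Icc (t + 1) H,
            (max (1 - (if t + 1 < τ then 0 else 1 / (H : ℝ))) 0
              - fpaReward b 1 (if t + 1 < τ then 0 else 1 / (H : ℝ))) :=
          per_round_bound H t hH ht b hbmem.1 hbmem.2
      _ = ∑ τ ∈ Finset.Icc (t + 1) H,
            (max ((1:ℝ) - M τ t) 0 - fpaReward (π.bids (fun _ => 1) (M τ) t ω) 1 (M τ t)) := by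
          refine Finset.sum_congr rfl fun τ hτ => ?_
          rw [Finset.mem_Icc] at hτ
          rw [bids_eq π H t τ hτ.1 ω]
      _ ≤ ∑ τ ∈ Finset.Icc 1 H,
            (max ((1:ℝ) - M τ t) 0 - fpaReward (π.bids (fun _ => 1) (M τ) t ω) 1 (M τ t)) := by
          refine Finset.sum_le_sum_of_subset_of_nonneg ?_ fun τ _ _ => ?_
          · intro x hx
            rw [Finset.mem_Icc] at hx ⊢
            omega
          · have hmem := π.bid_mem t (fun s : Fin t => ((1:ℝ), M τ (s:ℕ))) 1 ω
            exact fpa_term_nonneg hmem.2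
  -- integrate the pointwise bound
  have hge : ((H:ℝ) - 1) / 2 ≤ ∑ τ ∈ Finset.Icc 1 H, π.expRegret (fun _ => 1) (M τ) := by
    rw [hswap]
    have hci : MeasureTheory.Integrable (fun _ : π.Ω => ((H:ℝ) - 1) / 2) π.μ :=
      MeasureTheory.integrable_const _
    have hsi : MeasureTheory.Integrable
        (fun ω => ∑ τ ∈ Finset.Icc 1 H, ∑ t ∈ Finset.range H,
          (max ((1:ℝ) - M τ t) 0 - fpaReward (π.bids (fun _ => 1) (M τ) t ω) 1 (M τ t))) π.μ :=
      MeasureTheory.integrable_finset_sum _ hint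
    have := MeasureTheory.integral_mono hci hsi hpt
    simpa using this
  -- conclude
  have h2 : (1 / (H:ℝ)) * (((H:ℝ) - 1) / 2) ≤ (1 / (H:ℝ)) * ∑ τ ∈ Finset.Icc 1 H,
      π.expRegret (fun _ => 1) (M τ) :=
    mul_le_mul_of_nonneg_left hge (by positivity)
  have h3 : (1 / (H:ℝ)) * (((H:ℝ) - 1) / 2) = 1 / 2 - 1 / (2 * (H:ℝ)) := by
    have hne : (H:ℝ) ≠ 0 := ne_of_gt hHpos
    field_simp
  linarith [h2, h3.symm.le]
end

section
/- Let T be a positive integer and V a real number with 36/T ≤ V ≤ T/4. For every randomized bidding policy π over T rounds, there exists a sequence (v_t, m_t)_{t=1}^T ⊂ [0,1]^2 with Σ_{t=2}^T |m_t − m_{t−1}| ≤ V such that the expected dynamic regret of π on this sequence is at least √(T·V)/16. -/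
namespace VBLB

/-- Expectation over the first `n` coins (coin `i` is `true` w.p. `p`),
coins beyond the horizon forced to `false`. -/
noncomputable def Ex (p : ℝ) : ℕ → ((ℕ → Bool) → ℝ) → ℝ
  | 0, f => f fun _ => false
  | n + 1, f => (1 - p) * Ex p n f + p * Ex p n fun σ => f (Function.update σ n true)

lemma Ex_zero (p : ℝ) (f : (ℕ → Bool) → ℝ) : Ex p 0 f = f (fun _ => false) := rfl

lemma Ex_succ (p : ℝ) (n : ℕ) (f : (ℕ → Bool) → ℝ) :
    Ex p (n + 1) f
      = (1 - p) * Ex p n f + p * Ex p n (fun σ => f (Function.update σ n true)) := rfl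

lemma Ex_const (p : ℝ) (n : ℕ) (c : ℝ) : Ex p n (fun _ => c) = c := by
  induction n with
  | zero => rfl
  | succ n ih => simp [Ex_succ, ih]; ring

lemma Ex_add (p : ℝ) (n : ℕ) (f g : (ℕ → Bool) → ℝ) :
    Ex p n (fun σ => f σ + g σ) = Ex p n f + Ex p n g := by
  induction n generalizing f g with
  | zero => rfl
  | succ n ih => simp only [Ex_succ, ih]; ring

lemma Ex_const_mul (p : ℝ) (n : ℕ) (c : ℝ) (f : (ℕ → Bool) → ℝ) :
    Ex p n (fun σ => c * f σ) = c * Ex p n f := by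
  induction n generalizing f with
  | zero => rfl
  | succ n ih => simp only [Ex_succ, ih]; ring

lemma Ex_sum (p : ℝ) (n : ℕ) {ι : Type*} (s : Finset ι) (F : ι → (ℕ → Bool) → ℝ) :
    Ex p n (fun σ => ∑ i ∈ s, F i σ) = ∑ i ∈ s, Ex p n (F i) := by
  classical
  induction s using Finset.induction_on with
  | empty => simpa using Ex_const p n 0
  | insert _ _ hnot ih =>
      rw [Finset.sum_insert hnot]
      simp only [Finset.sum_insert hnot, ← ih, ← Ex_add]

lemma Ex_mono_supp (p : ℝ) (hp0 : 0 ≤ p) (hp1 : p ≤ 1) (n : ℕ) {f g : (ℕ → Bool) → ℝ}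
    (h : ∀ σ : ℕ → Bool, (∀ i, n ≤ i → σ i = false) → f σ ≤ g σ) :
    Ex p n f ≤ Ex p n g := by
  induction n generalizing f g with
  | zero => exact h _ (fun i _ => rfl)
  | succ n ih =>
      simp only [Ex_succ]
      have h1 : Ex p n f ≤ Ex p n g := by
        refine ih fun σ hσ => h σ fun i hi => hσ i (by omega)
      have h2 : Ex p n (fun σ => f (Function.update σ n true))
          ≤ Ex p n (fun σ => g (Function.update σ n true)) := by
        refine ih fun σ hσ => h _ fun i hi => ?_
        rw [Function.update_of_ne (by omega : i ≠ n)]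
        exact hσ i (by omega)
      have := mul_le_mul_of_nonneg_left h1 (by linarith : (0:ℝ) ≤ 1 - p)
      have := mul_le_mul_of_nonneg_left h2 hp0
      linarith

lemma Ex_congr_supp (p : ℝ) (hp0 : 0 ≤ p) (hp1 : p ≤ 1) (n : ℕ) {f g : (ℕ → Bool) → ℝ}
    (h : ∀ σ : ℕ → Bool, (∀ i, n ≤ i → σ i = false) → f σ = g σ) :
    Ex p n f = Ex p n g :=
  le_antisymm (Ex_mono_supp p hp0 hp1 n fun σ hσ => (h σ hσ).le)
    (Ex_mono_supp p hp0 hp1 n fun σ hσ => (h σ hσ).ge)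

lemma Ex_eq_of_indep (p : ℝ) (k : ℕ) {f : (ℕ → Bool) → ℝ}
    (h : ∀ (σ : ℕ → Bool) (i : ℕ), k ≤ i → f (Function.update σ i true) = f σ) :
    ∀ n, k ≤ n → Ex p n f = Ex p k f := by
  intro n
  induction n with
  | zero =>
      intro hk
      obtain rfl : k = 0 := Nat.le_zero.mp hk
      rfl
  | succ n ih =>
      intro hk
      rcases Nat.eq_or_lt_of_le hk with hk' | hk'
      · rw [hk']
      · have hkn : k ≤ n := by omega
        rw [Ex_succ]
        have : (fun σ => f (Function.update σ n true)) = f := by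
          funext σ; exact h σ n hkn
        rw [this, ih hkn]; ring

lemma Ex_exists_le (p : ℝ) (hp0 : 0 ≤ p) (hp1 : p ≤ 1) (n : ℕ) (f : (ℕ → Bool) → ℝ) :
    ∃ σ : ℕ → Bool, Ex p n f ≤ f σ := by
  induction n generalizing f with
  | zero => exact ⟨fun _ => false, le_rfl⟩
  | succ n ih =>
      obtain ⟨σ₁, h₁⟩ := ih f
      obtain ⟨σ₂, h₂⟩ := ih (fun σ => f (Function.update σ n true))
      rcases le_total (f σ₁) (f (Function.update σ₂ n true)) with hle | hle
      · refine ⟨Function.update σ₂ n true, ?_⟩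
        rw [Ex_succ]
        nlinarith
      · refine ⟨σ₁, ?_⟩
        rw [Ex_succ]
        nlinarith

open MeasureTheory in
lemma Ex_integrable {Ω : Type} [MeasurableSpace Ω] (μ : Measure Ω)
    (p : ℝ) (n : ℕ) (F : (ℕ → Bool) → Ω → ℝ) (hF : ∀ σ, Integrable (F σ) μ) :
    Integrable (fun ω => Ex p n (fun σ => F σ ω)) μ := by
  induction n generalizing F with
  | zero => exact hF _
  | succ n ih =>
      simp only [Ex_succ]
      exact ((ih F hF).const_mul _).add
        ((ih (fun σ => F (Function.update σ n true)) (fun σ => hF _)).const_mul _)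

open MeasureTheory in
lemma Ex_integral {Ω : Type} [MeasurableSpace Ω] (μ : Measure Ω)
    (p : ℝ) (n : ℕ) (F : (ℕ → Bool) → Ω → ℝ) (hF : ∀ σ, Integrable (F σ) μ) :
    ∫ ω, Ex p n (fun σ => F σ ω) ∂μ = Ex p n (fun σ => ∫ ω, F σ ω ∂μ) := by
  induction n generalizing F with
  | zero => rfl
  | succ n ih =>
      simp only [Ex_succ]
      rw [integral_add (((Ex_integrable μ p n F hF).const_mul _))
        ((Ex_integrable μ p n (fun σ => F (Function.update σ n true))
          (fun σ => hF _)).const_mul _),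
        MeasureTheory.integral_const_mul, MeasureTheory.integral_const_mul, ih F hF,
        ih (fun σ => F (Function.update σ n true)) (fun σ => hF _)]

/-- number of `true` coins among positions `< t` -/
def cnt (σ : ℕ → Bool) (t : ℕ) : ℕ := ((Finset.range t).filter (fun s => σ s = true)).card

lemma cnt_succ (σ : ℕ → Bool) (t : ℕ) :
    cnt σ (t + 1) = cnt σ t + (if σ t = true then 1 else 0) := by
  unfold cnt
  rw [Finset.range_add_one, Finset.filter_insert]
  by_cases h : σ t = true
  · rw [if_pos h, if_pos h, Finset.card_insert_of_notMem (by simp)]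
  · rw [if_neg h, if_neg h, add_zero]

lemma cnt_update_of_le (σ : ℕ → Bool) (i r : ℕ) (h : r ≤ i) (c : Bool) :
    cnt (Function.update σ i c) r = cnt σ r := by
  unfold cnt
  congr 1
  apply Finset.filter_congr
  intro s hs
  rw [Finset.mem_range] at hs
  rw [Function.update_of_ne (by omega : s ≠ i)]

lemma cnt_update_succ (σ : ℕ → Bool) (t : ℕ) :
    cnt (Function.update σ t true) (t + 1) = cnt σ t + 1 := by
  rw [cnt_succ, Function.update_self, if_pos rfl, cnt_update_of_le σ t t le_rfl]

lemma cnt_succ_cases (σ : ℕ → Bool) (t : ℕ) :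
    cnt σ (t + 1) = cnt σ t ∨ cnt σ (t + 1) = cnt σ t + 1 := by
  rw [cnt_succ]
  by_cases h : σ t = true
  · right; rw [if_pos h]
  · left; rw [if_neg h, add_zero]

/-- the adversarial `m`-sequence determined by the coins -/
noncomputable def mseq (ε : ℝ) (K M : ℕ) (σ : ℕ → Bool) : ℕ → ℝ :=
  fun t => ε * ((min (cnt σ (t + 1)) K % M : ℕ) : ℝ)

lemma Ex_cnt (p : ℝ) (hp0 : 0 ≤ p) (hp1 : p ≤ 1) (t : ℕ) :
    Ex p t (fun σ => (cnt σ t : ℝ)) = p * t := by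
  induction t with
  | zero =>
      simp [Ex_zero, cnt]
  | succ t ih =>
      rw [Ex_succ]
      have h1 : Ex p t (fun σ => (cnt σ (t + 1) : ℝ)) = p * t := by
        rw [← ih]
        apply Ex_congr_supp p hp0 hp1
        intro σ hσ
        rw [cnt_succ, hσ t le_rfl]
        simp
      have h2 : Ex p t (fun σ => (cnt (Function.update σ t true) (t + 1) : ℝ))
          = p * t + 1 := by
        have : (fun σ => (cnt (Function.update σ t true) (t + 1) : ℝ))
            = fun σ => (cnt σ t : ℝ) + 1 := by
          funext σ
          rw [cnt_update_succ]
          push_cast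
          ring
        rw [this, Ex_add, ih, Ex_const]
      rw [h1, h2]
      push_cast
      ring

lemma mod_succ_lt (n M j : ℕ) (hM : 2 ≤ M) (hj : n % M = j) (h : j + 1 < M) :
    (n + 1) % M = j + 1 := by
  rw [Nat.add_mod, hj, Nat.mod_eq_of_lt (by omega : 1 < M)]
  exact Nat.mod_eq_of_lt h

lemma mod_succ_eq_zero (n M j : ℕ) (hM : 2 ≤ M) (hj : n % M = j) (h : j + 1 = M) :
    (n + 1) % M = 0 := by
  rw [Nat.add_mod, hj, Nat.mod_eq_of_lt (by omega : 1 < M), h, Nat.mod_self]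

/-- potential for the variation telescoping -/
noncomputable def Phi (ε : ℝ) (M : ℕ) (x : ℕ) : ℝ := ε * ((x : ℝ) + ((x / M : ℕ) : ℝ) * ((M - 2 : ℕ) : ℝ))

lemma Phi_step (ε : ℝ) (hε : 0 ≤ ε) (M : ℕ) (hM : 2 ≤ M) (x : ℕ) :
    |ε * (((x + 1) % M : ℕ) : ℝ) - ε * ((x % M : ℕ) : ℝ)| ≤ Phi ε M (x + 1) - Phi ε M x := by
  have hM0 : 0 < M := by omega
  have hdm := Nat.div_add_mod x M
  set q := x / M with hq
  set r := x % M with hr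
  have hrM : r < M := Nat.mod_lt _ hM0
  by_cases h : r + 1 < M
  · have h1 : (x + 1) % M = r + 1 := mod_succ_lt x M r hM rfl h
    have h2 : (x + 1) / M = q := by
      have : x + 1 = M * q + (r + 1) := by omega
      rw [this, Nat.mul_add_div hM0, Nat.div_eq_of_lt h, add_zero]
    rw [h1, Phi, Phi, h2]
    have : ε * ((r + 1 : ℕ) : ℝ) - ε * ((r : ℕ) : ℝ) = ε := by push_cast; ring
    rw [this]
    have : |ε| = ε := abs_of_nonneg hε
    push_cast
    rw [show ε * (↑x + 1 + ↑q * ↑(M - 2)) - ε * (↑x + ↑q * ↑(M - 2)) = ε by ring]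
    rw [this]
  · have hrtop : r + 1 = M := by omega
    have h1 : (x + 1) % M = 0 := mod_succ_eq_zero x M r hM rfl hrtop
    have h2 : (x + 1) / M = q + 1 := by
      have : x + 1 = M * (q + 1) := by rw [Nat.mul_succ]; omega
      rw [this, Nat.mul_div_cancel_left _ hM0]
    rw [h1, Phi, Phi, h2]
    have hM2 : ((M - 2 : ℕ) : ℝ) = (M : ℝ) - 2 := by
      push_cast [Nat.cast_sub hM]; ring
    have habs : |ε * ((0 : ℕ) : ℝ) - ε * ((r : ℕ) : ℝ)| = ε * r := by
      simp only [Nat.cast_zero, mul_zero, zero_sub, abs_neg]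
      exact abs_of_nonneg (by positivity)
    rw [habs]
    push_cast [hM2]
    have hrcast : (r : ℝ) = (M : ℝ) - 1 := by
      have : ((r : ℕ) : ℝ) + 1 = ((M : ℕ) : ℝ) := by exact_mod_cast congrArg (Nat.cast : ℕ → ℝ) hrtop
      linarith
    rw [hrcast]
    ring_nf
    nlinarith [hε]

lemma Phi_mono (ε : ℝ) (hε : 0 ≤ ε) (M : ℕ) (x y : ℕ) (h : x ≤ y) :
    Phi ε M x ≤ Phi ε M y := by
  unfold Phi
  have h1 : x / M ≤ y / M := Nat.div_le_div_right h
  have := (Nat.cast_le (α := ℝ)).mpr h1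
  have := (Nat.cast_le (α := ℝ)).mpr h
  have : ((x:ℝ) + ((x / M : ℕ):ℝ) * ((M - 2 : ℕ):ℝ)) ≤ ((y:ℝ) + ((y / M : ℕ):ℝ) * ((M - 2 : ℕ):ℝ)) := by
    have hc : (0:ℝ) ≤ ((M - 2 : ℕ):ℝ) := Nat.cast_nonneg _
    nlinarith
  nlinarith

lemma Phi_nonneg (ε : ℝ) (hε : 0 ≤ ε) (M x : ℕ) : 0 ≤ Phi ε M x := by
  unfold Phi; positivity

lemma Phi_le (ε : ℝ) (hε : 0 ≤ ε) (M : ℕ) (hM : 2 ≤ M) (K : ℕ) :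
    Phi ε M K ≤ 2 * ε * K := by
  unfold Phi
  have h1 : (K / M) * (M - 2) ≤ K := by
    calc (K / M) * (M - 2) ≤ (K / M) * M := Nat.mul_le_mul_left _ (by omega)
    _ ≤ K := Nat.div_mul_le_self K M
  have := (Nat.cast_le (α := ℝ)).mpr h1
  push_cast at this ⊢
  nlinarith

lemma variation_telescope (ε : ℝ) (hε : 0 ≤ ε) (K M : ℕ) (hM : 2 ≤ M) (σ : ℕ → Bool) (n : ℕ) :
    ∑ t ∈ Finset.range n, |mseq ε K M σ (t + 1) - mseq ε K M σ t|
      ≤ Phi ε M (min (cnt σ (n + 1)) K) - Phi ε M (min (cnt σ 1) K) := by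
  induction n with
  | zero => simp
  | succ n ih =>
      rw [Finset.sum_range_succ]
      set a := fun t => min (cnt σ (t + 1)) K with ha
      have hstep : a (n + 1) = a n ∨ a (n + 1) = a n + 1 := by
        rcases cnt_succ_cases σ (n + 1) with h | h <;> simp only [ha] <;> rw [h] <;> omega
      have hterm : |mseq ε K M σ (n + 1) - mseq ε K M σ n|
          ≤ Phi ε M (a (n + 1)) - Phi ε M (a n) := by
        rcases hstep with h | h
        · simp only [mseq, ha] at *
          rw [h, sub_self, abs_zero, sub_self]
        · simp only [mseq, ha] at *
          rw [h]
          exact Phi_step ε hε M hM (a n)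
      calc ∑ t ∈ Finset.range n, |mseq ε K M σ (t + 1) - mseq ε K M σ t|
            + |mseq ε K M σ (n + 1) - mseq ε K M σ n|
          ≤ (Phi ε M (a n) - Phi ε M (min (cnt σ 1) K)) + (Phi ε M (a (n+1)) - Phi ε M (a n)) := by
            exact add_le_add ih hterm
        _ = Phi ε M (a (n + 1)) - Phi ε M (min (cnt σ 1) K) := by ring

lemma reg_nonneg (b m : ℝ) (hm : m ≤ 1) : 0 ≤ max (1 - m) 0 - fpaReward b 1 m := by
  unfold fpaReward
  by_cases h : m ≤ b
  · rw [if_pos h]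
    have : 1 - b ≤ 1 - m := by linarith
    have : 1 - b ≤ max (1 - m) 0 := le_trans this (le_max_left _ _)
    linarith
  · rw [if_neg h]
    have := le_max_right (1 - m) (0:ℝ)
    linarith

lemma regA (ε b m : ℝ) (hε0 : 0 < ε) (hε : ε ≤ 1/8) (hb0 : 0 ≤ b) (hb1 : b ≤ 1)
    (hm0 : 0 ≤ m) (hm : m + ε ≤ 1/2) :
    ε / 2 ≤ (1 - 2*ε) * (max (1 - m) 0 - fpaReward b 1 m)
      + (2*ε) * (max (1 - (m + ε)) 0 - fpaReward b 1 (m + ε)) := by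
  have hmax1 : max (1 - m) 0 = 1 - m := max_eq_left (by linarith)
  have hmax2 : max (1 - (m + ε)) 0 = 1 - (m + ε) := max_eq_left (by linarith)
  unfold fpaReward
  rw [hmax1, hmax2]
  rcases le_or_gt (m + ε) b with h1 | h1
  · rw [if_pos (by linarith : m ≤ b), if_pos h1]
    nlinarith
  · rcases le_or_gt m b with h2 | h2
    · rw [if_pos h2, if_neg (by linarith : ¬ (m + ε ≤ b))]
      nlinarith
    · rw [if_neg (by linarith : ¬ (m ≤ b)), if_neg (by linarith : ¬ (m + ε ≤ b))]
      nlinarith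

lemma regB (ε b m : ℝ) (hε0 : 0 < ε) (hε : ε ≤ 1/8) (hb0 : 0 ≤ b) (hb1 : b ≤ 1)
    (hm1 : 1/2 - ε ≤ m) (hm2 : m ≤ 1/2) :
    ε / 2 ≤ (1 - 2*ε) * (max (1 - m) 0 - fpaReward b 1 m)
      + (2*ε) * (max (1 - 0) 0 - fpaReward b 1 0) := by
  have hmax1 : max (1 - m) 0 = 1 - m := max_eq_left (by linarith)
  have hmax2 : max (1 - (0:ℝ)) 0 = 1 := by norm_num
  unfold fpaReward
  rw [hmax1, hmax2, if_pos hb0]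
  rcases le_or_gt m b with h1 | h1
  · rw [if_pos h1]
    nlinarith
  · rw [if_neg (by linarith : ¬ (m ≤ b))]
    nlinarith

/-- per-round regret of the policy on the adversarial sequence, at randomness `ω` -/
noncomputable def regf {T : ℕ} (π : BidPolicy T) (ε : ℝ) (K M : ℕ) (t : ℕ)
    (σ : ℕ → Bool) (ω : π.Ω) : ℝ :=
  max (1 - mseq ε K M σ t) 0
    - fpaReward (π.bids (fun _ => 1) (mseq ε K M σ) t ω) 1 (mseq ε K M σ t)

lemma mseq_nonneg (ε : ℝ) (hε : 0 ≤ ε) (K M : ℕ) (σ : ℕ → Bool) (t : ℕ) :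
    0 ≤ mseq ε K M σ t := by
  unfold mseq; positivity

lemma mseq_le_half (ε : ℝ) (hε : 0 ≤ ε) (K M0 : ℕ) (hεM0 : ε * M0 ≤ 1/2)
    (σ : ℕ → Bool) (t : ℕ) : mseq ε K (M0 + 1) σ t ≤ 1/2 := by
  unfold mseq
  have h1 : min (cnt σ (t + 1)) K % (M0 + 1) ≤ M0 := by
    have := Nat.mod_lt (min (cnt σ (t + 1)) K) (show 0 < M0 + 1 by omega)
    omega
  have h2 : ((min (cnt σ (t + 1)) K % (M0 + 1) : ℕ) : ℝ) ≤ (M0 : ℝ) := by exact_mod_cast h1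
  nlinarith

lemma bids_update (T : ℕ) (π : BidPolicy T) (ε : ℝ) (K M : ℕ) (t i : ℕ) (hi : t ≤ i)
    (σ : ℕ → Bool) (ω : π.Ω) :
    π.bids (fun _ => 1) (mseq ε K M (Function.update σ i true)) t ω
      = π.bids (fun _ => 1) (mseq ε K M σ) t ω := by
  unfold BidPolicy.bids
  have : (fun s : Fin t => ((1:ℝ), mseq ε K M (Function.update σ i true) s))
      = fun s : Fin t => ((1:ℝ), mseq ε K M σ s) := by
    funext s
    have hs : (s : ℕ) + 1 ≤ i := by have := s.isLt; omega
    unfold mseq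
    rw [cnt_update_of_le σ i (s + 1) hs true]
  rw [this]

lemma regf_indep (T : ℕ) (π : BidPolicy T) (ε : ℝ) (K M : ℕ) (t i : ℕ) (hi : t + 1 ≤ i)
    (σ : ℕ → Bool) (ω : π.Ω) :
    regf π ε K M t (Function.update σ i true) ω = regf π ε K M t σ ω := by
  unfold regf
  rw [bids_update T π ε K M t i (by omega) σ ω]
  have : mseq ε K M (Function.update σ i true) t = mseq ε K M σ t := by
    unfold mseq
    rw [cnt_update_of_le σ i (t + 1) hi true]
  rw [this]

lemma regf_step (T : ℕ) (π : BidPolicy T) (ε : ℝ) (K M0 : ℕ)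
    (hε0 : 0 < ε) (hε8 : ε ≤ 1/8) (hM0 : 1 ≤ M0)
    (hεM0 : ε * M0 ≤ 1/2) (hεM0' : 1/2 - ε ≤ ε * M0)
    (t : ℕ) (ω : π.Ω) (σ : ℕ → Bool) (hσt : σ t = false) :
    (ε/2) * (if cnt σ t < K then 1 else 0)
      ≤ (1 - 2*ε) * regf π ε K (M0+1) t σ ω
        + (2*ε) * regf π ε K (M0+1) t (Function.update σ t true) ω := by
  have hb := π.bid_mem t (fun s : Fin t => ((1:ℝ), mseq ε K (M0+1) σ s)) 1 ω
  set b := π.bids (fun _ => 1) (mseq ε K (M0+1) σ) t ω with hbdef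
  have hbmem : b ∈ Set.Icc (0:ℝ) 1 := hb
  have hbids := bids_update T π ε K (M0+1) t t le_rfl σ ω
  by_cases hc : cnt σ t < K
  · rw [if_pos hc]
    have hn1 : cnt σ (t + 1) = cnt σ t := by rw [cnt_succ, hσt]; simp
    have hmin1 : min (cnt σ (t + 1)) K = cnt σ t := by rw [hn1]; exact min_eq_left hc.le
    have hmin2 : min (cnt (Function.update σ t true) (t + 1)) K = cnt σ t + 1 := by
      rw [cnt_update_succ σ t]; exact min_eq_left (by omega)
    have hm : mseq ε K (M0+1) σ t = ε * ((cnt σ t % (M0+1) : ℕ) : ℝ) := by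
      unfold mseq; rw [hmin1]
    set j := cnt σ t % (M0 + 1) with hj
    have hjlt : j < M0 + 1 := Nat.mod_lt _ (by omega)
    by_cases htop : j + 1 < M0 + 1
    · have hmodsucc : (cnt σ t + 1) % (M0+1) = j + 1 :=
        mod_succ_lt _ _ _ (by omega) hj.symm htop
      have hm' : mseq ε K (M0+1) (Function.update σ t true) t
          = mseq ε K (M0+1) σ t + ε := by
        unfold mseq
        rw [hmin1, hmin2, hmodsucc, ← hj]
        push_cast
        ring
      unfold regf
      rw [hbids, hm', ← hbdef, mul_one]
      apply regA ε b _ hε0 hε8 hbmem.1 hbmem.2 (mseq_nonneg ε hε0.le _ _ σ t)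
      rw [hm]
      have hjM : (j : ℝ) + 1 ≤ (M0 : ℝ) := by exact_mod_cast (by omega : j + 1 ≤ M0)
      nlinarith
    · have hjeq : j = M0 := by omega
      have hmodsucc : (cnt σ t + 1) % (M0+1) = 0 :=
        mod_succ_eq_zero _ _ _ (by omega) hj.symm (by omega)
      have hm' : mseq ε K (M0+1) (Function.update σ t true) t = 0 := by
        unfold mseq
        rw [hmin2, hmodsucc]
        simp
      unfold regf
      rw [hbids, hm', ← hbdef, mul_one]
      apply regB ε b _ hε0 hε8 hbmem.1 hbmem.2
      · rw [hm, hjeq] at *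
        have : ((M0:ℕ):ℝ) = (M0:ℝ) := rfl
        linarith [hεM0']
      · rw [hm, hjeq]
        linarith [hεM0]
  · rw [if_neg hc, mul_zero]
    have h1 : 0 ≤ regf π ε K (M0+1) t σ ω :=
      reg_nonneg _ _ (by linarith [mseq_le_half ε hε0.le K M0 hεM0 σ t])
    have h2 : 0 ≤ regf π ε K (M0+1) t (Function.update σ t true) ω :=
      reg_nonneg _ _ (by linarith [mseq_le_half ε hε0.le K M0 hεM0 (Function.update σ t true) t])
    nlinarith

end VBLB

open VBLB

set_option maxHeartbeats 2000000

/-- Minimax lower bound under the temporal variation constraint: for `36/T ≤ V ≤ T/4`,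
every randomized bidding policy suffers expected dynamic regret at least `√(T·V)/16`
on some sequence in `[0,1]²` whose temporal variation is at most `V`. -/
theorem variation_budget_minimax_lower_bound
    (T : ℕ) (hT : 0 < T) (V : ℝ) (hV₁ : 36 / (T : ℝ) ≤ V) (hV₂ : V ≤ (T : ℝ) / 4)
    (π : BidPolicy T) :
    ∃ v m : ℕ → ℝ, (∀ t, v t ∈ Set.Icc (0:ℝ) 1) ∧ (∀ t, m t ∈ Set.Icc (0:ℝ) 1) ∧
      totalVariation m T ≤ V ∧
      Real.sqrt ((T : ℝ) * V) / 16 ≤ π.expRegret v m := by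
  classical
  haveI : MeasureTheory.IsProbabilityMeasure π.μ := π.isProb
  have hT0 : (0:ℝ) < T := by exact_mod_cast hT
  obtain ⟨Q, hQdef⟩ : ∃ q : ℝ, q = Real.sqrt ((T:ℝ) * V) := ⟨_, rfl⟩
  rw [← hQdef]
  have hTV36 : (36:ℝ) ≤ (T:ℝ) * V := by
    rw [div_le_iff₀ hT0] at hV₁
    linarith
  have hTVpos : (0:ℝ) < (T:ℝ) * V := by linarith
  have hQsq : Q^2 = (T:ℝ) * V := by rw [hQdef]; exact Real.sq_sqrt hTVpos.le
  have hQ6 : (6:ℝ) ≤ Q := by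
    have h36 : Real.sqrt 36 = 6 := by
      rw [show (36:ℝ) = 6^2 by norm_num]
      exact Real.sqrt_sq (by norm_num)
    rw [hQdef, ← h36]
    exact Real.sqrt_le_sqrt hTV36
  have hQpos : (0:ℝ) < Q := by linarith
  have hQle : Q ≤ (T:ℝ)/2 := by
    have h1 : (T:ℝ) * V ≤ ((T:ℝ)/2)^2 := by
      have := mul_le_mul_of_nonneg_left hV₂ hT0.le
      nlinarith
    rw [hQdef]
    calc Real.sqrt ((T:ℝ)*V) ≤ Real.sqrt (((T:ℝ)/2)^2) := Real.sqrt_le_sqrt h1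
      _ = (T:ℝ)/2 := Real.sqrt_sq (by positivity)
  obtain ⟨ε, hεdef⟩ : ∃ e : ℝ, e = Q / (4 * (T:ℝ)) := ⟨_, rfl⟩
  have hε0 : (0:ℝ) < ε := by rw [hεdef]; positivity
  have hε8 : ε ≤ 1/8 := by
    rw [hεdef, div_le_iff₀ (by positivity)]
    linarith
  have hεT : ε * T = Q / 4 := by
    rw [hεdef]
    field_simp
  obtain ⟨K, hKdef⟩ : ∃ k : ℕ, k = Nat.floor (2 * Q) := ⟨_, rfl⟩
  have hKle : (K:ℝ) ≤ 2 * Q := by rw [hKdef]; exact Nat.floor_le (by positivity)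
  have hKge : 2 * Q - 1 ≤ (K:ℝ) := by
    have := Nat.lt_floor_add_one (2 * Q)
    rw [← hKdef] at this
    linarith
  have hKQ : (11/6) * Q ≤ (K:ℝ) := by linarith
  have hKpos : (0:ℝ) < (K:ℝ) := by linarith
  have hεK : 2 * ε * K ≤ V := by
    have h1 : 2 * ε * (K:ℝ) ≤ 2 * ε * (2*Q) :=
      mul_le_mul_of_nonneg_left hKle (by positivity)
    have h2 : 2 * ε * (2 * Q) = V := by
      rw [hεdef]
      field_simp
      nlinarith [hQsq]
    linarith
  obtain ⟨M0, hM0def⟩ : ∃ m : ℕ, m = Nat.floor (1 / (2 * ε)) := ⟨_, rfl⟩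
  have hM0le : (M0:ℝ) ≤ 1/(2*ε) := by rw [hM0def]; exact Nat.floor_le (by positivity)
  have hM0ge : 1/(2*ε) - 1 ≤ (M0:ℝ) := by
    have := Nat.lt_floor_add_one (1/(2*ε))
    rw [← hM0def] at this
    linarith
  have h2ε : (4:ℝ) ≤ 1/(2*ε) := by
    rw [le_div_iff₀ (by positivity)]
    linarith
  have hM0one : 1 ≤ M0 := by
    have h : (1:ℝ) ≤ (M0:ℝ) := by linarith
    exact_mod_cast h
  have hεM0 : ε * (M0:ℝ) ≤ 1/2 := by
    have h := mul_le_mul_of_nonneg_left hM0le hε0.le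
    have h2 : ε * (1/(2*ε)) = 1/2 := by field_simp
    linarith
  have hεM0' : 1/2 - ε ≤ ε * (M0:ℝ) := by
    have h := mul_le_mul_of_nonneg_left hM0ge hε0.le
    have h2 : ε * (1/(2*ε) - 1) = 1/2 - ε := by
      field_simp
    linarith
  have hp0 : (0:ℝ) ≤ 2 * ε := by positivity
  have hp1 : 2 * ε ≤ 1 := by linarith
  obtain ⟨M, hMdef⟩ : ∃ m : ℕ, m = M0 + 1 := ⟨_, rfl⟩
  -- membership of the m-sequence in [0,1]
  have hmem : ∀ σ t, mseq ε K M σ t ∈ Set.Icc (0:ℝ) 1 := by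
    intro σ t
    refine ⟨mseq_nonneg ε hε0.le K M σ t, ?_⟩
    have := mseq_le_half ε hε0.le K M0 hεM0 σ t
    rw [← hMdef] at this
    linarith
  -- variation bound
  have hvar : ∀ σ, totalVariation (mseq ε K M σ) T ≤ V := by
    intro σ
    unfold totalVariation
    have h1 := variation_telescope ε hε0.le K M (by omega) σ (T-1)
    have h2 : Phi ε M (min (cnt σ (T-1+1)) K) ≤ Phi ε M K :=
      Phi_mono ε hε0.le M _ _ (min_le_right _ _)
    have h3 := Phi_nonneg ε hε0.le M (min (cnt σ 1) K)
    have h4 := Phi_le ε hε0.le M (by omega) K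
    linarith
  -- integrability
  have hbidmeas : ∀ (t : ℕ) (h : Fin t → ℝ × ℝ) (v : ℝ),
      Measurable (fun ω => π.bid t h v ω) := by
    intro t h v
    exact (π.bid_measurable t).comp
      (measurable_const.prodMk (measurable_const.prodMk measurable_id))
  have hIntF : ∀ t σ, MeasureTheory.Integrable (fun ω => regf π ε K M t σ ω) π.μ := by
    intro t σ
    unfold regf
    apply MeasureTheory.Integrable.sub (MeasureTheory.integrable_const _)
    have hmeas : Measurable (fun ω =>
        fpaReward (π.bids (fun _ => 1) (mseq ε K M σ) t ω) 1 (mseq ε K M σ t)) := by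
      unfold fpaReward BidPolicy.bids
      exact Measurable.ite
        (measurableSet_le measurable_const (hbidmeas t _ _))
        (measurable_const.sub (hbidmeas t _ _)) measurable_const
    apply MeasureTheory.Integrable.mono' (MeasureTheory.integrable_const (1:ℝ))
      hmeas.aestronglyMeasurable
    filter_upwards with ω
    have hb : π.bids (fun _ => 1) (mseq ε K M σ) t ω ∈ Set.Icc (0:ℝ) 1 :=
      π.bid_mem t _ _ ω
    unfold fpaReward
    by_cases h : mseq ε K M σ t ≤ π.bids (fun _ => 1) (mseq ε K M σ) t ω
    · rw [if_pos h]
      rw [Real.norm_eq_abs, abs_le]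
      constructor <;> [linarith [hb.2]; linarith [hb.1]]
    · rw [if_neg h]
      simp
  have hIntS : ∀ σ, MeasureTheory.Integrable
      (fun ω => ∑ t ∈ Finset.range T, regf π ε K M t σ ω) π.μ :=
    fun σ => MeasureTheory.integrable_finset_sum _ (fun t _ => hIntF t σ)
  -- expRegret as an integral of the per-round regrets
  have hER : ∀ σ, π.expRegret (fun _ => 1) (mseq ε K M σ)
      = ∫ ω, (∑ t ∈ Finset.range T, regf π ε K M t σ ω) ∂π.μ := by
    intro σ
    rfl
  -- pointwise (in ω) lower bound on the coin-average of the total regret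
  have hcore : ∀ ω, Q/16 ≤ Ex (2*ε) T (fun σ => ∑ t ∈ Finset.range T, regf π ε K M t σ ω) := by
    intro ω
    rw [Ex_sum]
    have hround : ∀ t ∈ Finset.range T,
        Q/(16*T) ≤ Ex (2*ε) T (fun σ => regf π ε K M t σ ω) := by
      intro t ht
      rw [Finset.mem_range] at ht
      have h1 : Ex (2*ε) T (fun σ => regf π ε K M t σ ω)
          = Ex (2*ε) (t+1) (fun σ => regf π ε K M t σ ω) :=
        Ex_eq_of_indep (2*ε) (t+1) (fun σ i hi => regf_indep T π ε K M t i hi σ ω) T ht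
      have h2 : Ex (2*ε) (t+1) (fun σ => regf π ε K M t σ ω)
          = Ex (2*ε) t (fun σ => (1-2*ε) * regf π ε K M t σ ω
              + 2*ε * regf π ε K M t (Function.update σ t true) ω) := by
        rw [Ex_succ, Ex_add, Ex_const_mul, Ex_const_mul]
      have h3 : Ex (2*ε) t (fun σ => (ε/2) * (if cnt σ t < K then (1:ℝ) else 0))
          ≤ Ex (2*ε) t (fun σ => (1-2*ε) * regf π ε K M t σ ω
              + 2*ε * regf π ε K M t (Function.update σ t true) ω) := by
        apply Ex_mono_supp (2*ε) hp0 hp1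
        intro σ hσ
        have hσt : σ t = false := hσ t le_rfl
        have hst := regf_step T π ε K M0 hε0 hε8 hM0one hεM0 hεM0' t ω σ hσt
        rw [hMdef]
        exact hst
      have h4 : Ex (2*ε) t (fun σ => (ε/2) * (if cnt σ t < K then (1:ℝ) else 0))
          = (ε/2) * Ex (2*ε) t (fun σ => (if cnt σ t < K then (1:ℝ) else 0)) :=
        Ex_const_mul (2*ε) t (ε/2) _
      have h5 : (1 : ℝ) - 2*ε * t / K
          ≤ Ex (2*ε) t (fun σ => (if cnt σ t < K then (1:ℝ) else 0)) := by
        have hpt : Ex (2*ε) t (fun σ => 1 - (cnt σ t : ℝ)/K)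
            ≤ Ex (2*ε) t (fun σ => (if cnt σ t < K then (1:ℝ) else 0)) := by
          apply Ex_mono_supp (2*ε) hp0 hp1
          intro σ _
          by_cases h : cnt σ t < K
          · rw [if_pos h]
            have : (0:ℝ) ≤ (cnt σ t : ℝ)/K := by positivity
            linarith
          · rw [if_neg h]
            have hge : (K:ℝ) ≤ (cnt σ t : ℝ) := by
              exact_mod_cast Nat.le_of_not_lt h
            have : (1:ℝ) ≤ (cnt σ t : ℝ)/K := by rw [le_div_iff₀ hKpos]; linarith
            linarith
        have heq : Ex (2*ε) t (fun σ => 1 - (cnt σ t : ℝ)/K) = 1 - 2*ε * t / K := by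
          have hfun : (fun σ : ℕ → Bool => 1 - (cnt σ t : ℝ)/K)
              = fun σ => (1:ℝ) + (-(1/K)) * (cnt σ t : ℝ) := by
            funext σ
            ring
          rw [hfun, Ex_add, Ex_const, Ex_const_mul, Ex_cnt (2*ε) hp0 hp1 t]
          ring
        linarith
      have h6 : 2*ε * t / K ≤ 3/11 := by
        have hptT : 2*ε * (t:ℝ) ≤ 2*ε * (T:ℝ) := by
          have h : (t:ℝ) ≤ (T:ℝ) := by exact_mod_cast ht.le
          exact mul_le_mul_of_nonneg_left h hp0
        have hpT : 2*ε * T = Q/2 := by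
          nlinarith [hεT]
        rw [div_le_iff₀ hKpos]
        linarith [hKQ, hpT, hptT]
      have h7 : Q/(16*T) ≤ (ε/2) * (1 - 2*ε*t/K) := by
        have h8 : (8:ℝ)/11 ≤ 1 - 2*ε*t/K := by linarith
        have hε2 : ε/2 = Q/(8*T) := by rw [hεdef]; ring
        have hpos : (0:ℝ) < Q/(8*T) := by positivity
        rw [hε2]
        have h9 : Q/(8*T) * (8/11) ≤ Q/(8*T) * (1 - 2*ε*t/K) :=
          mul_le_mul_of_nonneg_left h8 hpos.le
        have h10 : Q/(16*T) ≤ Q/(8*T) * (8/11) := by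
          rw [div_mul_eq_mul_div, div_le_div_iff₀ (by positivity) (by positivity)]
          nlinarith
        linarith
      have h11 : (ε/2) * (1 - 2*ε*t/K) ≤ (ε/2) * Ex (2*ε) t (fun σ => (if cnt σ t < K then (1:ℝ) else 0)) :=
        mul_le_mul_of_nonneg_left h5 (by positivity)
      linarith [h1, h2, h3, h4, h5, h7, h11]
    calc Q/16 = ∑ _t ∈ Finset.range T, Q/(16*T) := by
          rw [Finset.sum_const, Finset.card_range, nsmul_eq_mul]
          field_simp
      _ ≤ ∑ t ∈ Finset.range T, Ex (2*ε) T (fun σ => regf π ε K M t σ ω) :=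
          Finset.sum_le_sum hround
  -- lift the bound through the integral over ω
  have hlift : Q/16 ≤ Ex (2*ε) T (fun σ => π.expRegret (fun _ => 1) (mseq ε K M σ)) := by
    have h1 : Ex (2*ε) T (fun σ => π.expRegret (fun _ => 1) (mseq ε K M σ))
        = ∫ ω, Ex (2*ε) T (fun σ => ∑ t ∈ Finset.range T, regf π ε K M t σ ω) ∂π.μ := by
      rw [Ex_integral π.μ (2*ε) T _ hIntS]
      exact congrArg (Ex (2*ε) T) (funext hER)
    rw [h1]
    have h2 : (Q/16 : ℝ) = ∫ _ω, (Q/16 : ℝ) ∂π.μ := by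
      rw [MeasureTheory.integral_const]
      simp
    rw [h2]
    exact MeasureTheory.integral_mono (MeasureTheory.integrable_const _)
      (Ex_integrable π.μ (2*ε) T _ hIntS) hcore
  obtain ⟨σ, hσ⟩ := Ex_exists_le (2*ε) hp0 hp1 T
    (fun σ => π.expRegret (fun _ => 1) (mseq ε K M σ))
  refine ⟨(fun _ => 1), mseq ε K M σ, ?_, hmem σ, hvar σ, ?_⟩
  · intro t
    exact ⟨by norm_num, le_rfl⟩
  · exact le_trans hlift hσ
end

section
/- Let T be a positive integer and L a positive integer with L ≤ T/3. For every randomized bidding policy π over T rounds, there exists a sequence (v_t, m_t)_{t=1}^T ⊂ [0,1]^2 with Σ_{t=2}^T 𝟙[m_t ≠ m_{t−1}] ≤ L such that the expected dynamic regret of π on this sequence is at least L/8. -/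
/-- The adversarial sequence of highest competing bids: for the first `L` rounds,
pick `0` if the policy's expected bid is at least `1/4`, else `1/2`; afterwards `0`. -/
noncomputable def advM (T L : ℕ) (π : BidPolicy T) : ℕ → ℝ
  | t =>
    if t < L then
      (if 1/4 ≤ ∫ ω, π.bid t (fun s : Fin t => ((1:ℝ), advM T L π s)) 1 ω ∂π.μ then 0 else 1/2)
    else 0
  decreasing_by all_goals exact s.isLt

lemma advM_mem (T L : ℕ) (π : BidPolicy T) (t : ℕ) : advM T L π t ∈ Set.Icc (0:ℝ) 1 := by
  rw [advM]
  split_ifs <;> constructor <;> norm_num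

lemma advM_eq_zero (T L : ℕ) (π : BidPolicy T) {t : ℕ} (h : L ≤ t) : advM T L π t = 0 := by
  rw [advM, if_neg (not_lt.mpr h)]

lemma regret_nonneg (b v m : ℝ) : 0 ≤ max (v - m) 0 - fpaReward b v m := by
  unfold fpaReward
  split_ifs with h
  · have : v - b ≤ max (v - m) 0 := le_trans (by linarith) (le_max_left _ _)
    linarith
  · simp

lemma bid_meas {T : ℕ} (π : BidPolicy T) (t : ℕ) (h : Fin t → ℝ × ℝ) (v : ℝ) :
    Measurable fun ω => π.bid t h v ω :=
  (π.bid_measurable t).comp (measurable_const.prodMk (measurable_const.prodMk measurable_id))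

/-- Minimax lower bound under the switching constraint: for a positive integer
`L ≤ T/3`, every randomized bidding policy suffers expected dynamic regret at least
`L/8` on some sequence in `[0,1]²` with at most `L` switches. -/
theorem switching_budget_minimax_lower_bound
    (T L : ℕ) (hT : 0 < T) (hL : 0 < L) (hLT : (L : ℝ) ≤ (T : ℝ) / 3)
    (π : BidPolicy T) :
    ∃ v m : ℕ → ℝ, (∀ t, v t ∈ Set.Icc (0:ℝ) 1) ∧ (∀ t, m t ∈ Set.Icc (0:ℝ) 1) ∧
      numSwitches m T ≤ (L : ℝ) ∧
      (L : ℝ) / 8 ≤ π.expRegret v m := by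
  classical
  haveI := π.isProb
  have hLTnat : L ≤ T := by
    have hT0 : (0:ℝ) ≤ (T:ℝ) := Nat.cast_nonneg T
    have : (L:ℝ) ≤ (T:ℝ) := le_trans hLT (by linarith)
    exact_mod_cast this
  set vv : ℕ → ℝ := fun _ => 1 with hvv
  set mm : ℕ → ℝ := advM T L π with hmm
  refine ⟨vv, mm, fun t => ⟨zero_le_one, le_refl 1⟩, fun t => advM_mem T L π t, ?_, ?_⟩
  · -- numSwitches bound
    unfold numSwitches
    calc ∑ t ∈ Finset.range (T-1), (if mm (t+1) ≠ mm t then (1:ℝ) else 0)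
        ≤ ∑ t ∈ Finset.range (T-1), (if t < L then (1:ℝ) else 0) := by
          apply Finset.sum_le_sum
          intro t _
          by_cases h : t < L
          · split_ifs <;> norm_num
          · have h1 : mm (t+1) = 0 := advM_eq_zero T L π (le_trans (not_lt.1 h) (Nat.le_succ t))
            have h2 : mm t = 0 := advM_eq_zero T L π (not_lt.1 h)
            simp [h1, h2, h]
      _ = (((Finset.range (T-1)).filter (fun t => t < L)).card : ℝ) := by
          rw [Finset.sum_boole]
      _ ≤ (L:ℝ) := by
          have hsub : ((Finset.range (T-1)).filter (fun t => t < L)) ⊆ Finset.range L := by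
            intro x hx
            simp only [Finset.mem_filter, Finset.mem_range] at hx ⊢
            exact hx.2
          have := Finset.card_le_card hsub
          rw [Finset.card_range] at this
          exact_mod_cast this
  · -- regret bound
    set f : ℕ → π.Ω → ℝ := fun t ω =>
      max (vv t - mm t) 0 - fpaReward (π.bids vv mm t ω) (vv t) (mm t) with hf
    have hbmem : ∀ t ω, π.bids vv mm t ω ∈ Set.Icc (0:ℝ) 1 := fun t ω => π.bid_mem _ _ _ _
    have hbmeas : ∀ t, Measurable fun ω => π.bids vv mm t ω := fun t => bid_meas π _ _ _
    have hbint : ∀ t, MeasureTheory.Integrable (fun ω => π.bids vv mm t ω) π.μ := by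
      intro t
      refine MeasureTheory.Integrable.mono' (MeasureTheory.integrable_const 1)
        (hbmeas t).aestronglyMeasurable (Filter.Eventually.of_forall fun ω => ?_)
      have := hbmem t ω
      rw [Real.norm_eq_abs, abs_le]
      exact ⟨by linarith [this.1], this.2⟩
    have hfmeas : ∀ t, Measurable (f t) := by
      intro t
      apply Measurable.sub measurable_const
      have : Measurable fun x : ℝ => fpaReward x (vv t) (mm t) := by
        unfold fpaReward
        exact Measurable.ite (measurableSet_le measurable_const measurable_id)
          (measurable_const.sub measurable_id) measurable_const
      exact this.comp (hbmeas t)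
    have hfbound : ∀ t ω, |f t ω| ≤ 2 := by
      intro t ω
      have hb := hbmem t ω
      have hm := advM_mem T L π t
      have h1 : 0 ≤ max (vv t - mm t) 0 := le_max_right _ _
      have h2 : max (vv t - mm t) 0 ≤ 1 := by
        apply max_le _ zero_le_one
        simp only [hvv]
        linarith [hm.1]
      have h3 : 0 ≤ fpaReward (π.bids vv mm t ω) (vv t) (mm t) := by
        unfold fpaReward
        split_ifs with h
        · simp only [hvv]; linarith [hb.2]
        · exact le_refl 0
      have h4 : fpaReward (π.bids vv mm t ω) (vv t) (mm t) ≤ 1 := by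
        unfold fpaReward
        split_ifs with h
        · simp only [hvv]; linarith [hb.1]
        · norm_num
      have hfe : f t ω = max (vv t - mm t) 0 - fpaReward (π.bids vv mm t ω) (vv t) (mm t) := rfl
      rw [hfe, abs_le]
      constructor <;> linarith
    have hfint : ∀ t, MeasureTheory.Integrable (f t) π.μ := by
      intro t
      exact MeasureTheory.Integrable.mono' (MeasureTheory.integrable_const 2)
        (hfmeas t).aestronglyMeasurable (Filter.Eventually.of_forall (hfbound t))
    have hfnonneg : ∀ t ω, 0 ≤ f t ω := fun t ω => regret_nonneg _ _ _
    have hkey : ∀ t ∈ Finset.range L, (1:ℝ)/4 ≤ ∫ ω, f t ω ∂π.μ := by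
      intro t ht
      rw [Finset.mem_range] at ht
      set b : π.Ω → ℝ := fun ω => π.bid t (fun s : Fin t => ((1:ℝ), advM T L π s)) 1 ω with hb
      have hbids : ∀ ω, π.bids vv mm t ω = b ω := fun ω => rfl
      have hmt : mm t = if 1/4 ≤ ∫ ω, b ω ∂π.μ then 0 else 1/2 := by
        rw [hmm, advM, if_pos ht]
      by_cases hI : (1:ℝ)/4 ≤ ∫ ω, b ω ∂π.μ
      · have hmt0 : mm t = 0 := by rw [hmt, if_pos hI]
        have hfe : ∀ ω, f t ω = b ω := by
          intro ω
          rw [hf]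
          simp only [hbids]
          simp only [hbids, hmt0, hvv, fpaReward]
          rw [if_pos (π.bid_mem t _ _ ω).1]
          simp
        calc (1:ℝ)/4 ≤ ∫ ω, b ω ∂π.μ := hI
          _ = ∫ ω, f t ω ∂π.μ := by
            apply MeasureTheory.integral_congr_ae
            exact Filter.Eventually.of_forall fun ω => (hfe ω).symm
      · have hmt0 : mm t = 1/2 := by rw [hmt, if_neg hI]
        push_neg at hI
        have hbi : MeasureTheory.Integrable b π.μ := hbint t
        have hpt : ∀ ω, (1:ℝ)/2 - b ω ≤ f t ω := by
          intro ω
          have hbω := π.bid_mem t (fun s : Fin t => ((1:ℝ), advM T L π s)) 1 ω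
          rw [hf]
          simp only [hbids]
          simp only [hbids, hmt0, hvv, fpaReward]
          have hmax : max ((1:ℝ) - 1/2) 0 = 1/2 := by norm_num
          rw [hmax]
          split_ifs with h
          · linarith
          · linarith [hbω.1]
        have : ∫ ω, ((1:ℝ)/2 - b ω) ∂π.μ ≤ ∫ ω, f t ω ∂π.μ := by
          apply MeasureTheory.integral_mono ((MeasureTheory.integrable_const _).sub hbi)
            (hfint t) hpt
        have heq : ∫ ω, ((1:ℝ)/2 - b ω) ∂π.μ = 1/2 - ∫ ω, b ω ∂π.μ := by
          rw [MeasureTheory.integral_sub (MeasureTheory.integrable_const _) hbi]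
          simp
        rw [heq] at this
        linarith
    have hsum : ∀ t, 0 ≤ ∫ ω, f t ω ∂π.μ := fun t =>
      MeasureTheory.integral_nonneg (hfnonneg t)
    have hexp : π.expRegret vv mm = ∑ t ∈ Finset.range T, ∫ ω, f t ω ∂π.μ := by
      rw [BidPolicy.expRegret]
      rw [MeasureTheory.integral_finset_sum _ (fun t _ => hfint t)]
    rw [hexp]
    calc (L:ℝ)/8 ≤ (L:ℝ)/4 := by
          have : (0:ℝ) ≤ L := Nat.cast_nonneg L
          linarith
      _ = ∑ t ∈ Finset.range L, (1:ℝ)/4 := by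
          rw [Finset.sum_const, Finset.card_range]
          ring
      _ ≤ ∑ t ∈ Finset.range L, ∫ ω, f t ω ∂π.μ := Finset.sum_le_sum hkey
      _ ≤ ∑ t ∈ Finset.range T, ∫ ω, f t ω ∂π.μ :=
          Finset.sum_le_sum_of_subset_of_nonneg
            (Finset.range_subset_range.mpr hLTnat) (fun t _ _ => hsum t)
end

section
/- There exist constants C > 0 and k ∈ ℕ such that for every integer T ≥ 2 there exists a single randomized bidding policy π over T rounds (constructed without knowledge of the variation) such that for every sequence (v_t, m_t)_{t=1}^T ⊂ [0,1]^2, the expected dynamic regret of π on this sequence is at most C · max{√(T·V_T), 1} · (1 + log T)^k, where V_T = Σ_{t=2}^T |m_t − m_{t−1}|. -/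
/-! ### Auxiliary material for the proof -/

/-- The adaptive deterministic bidding rule: at round `t ≥ 1`, bid (a clamping of)
`min vₜ (m_{t-1} + √((1/T + V_{<t})/T))` where `V_{<t}` is the variation observed so far. -/
noncomputable def myBid (T t : ℕ) (h : Fin t → ℝ × ℝ) (v : ℝ) : ℝ :=
  if ht : 0 < t then
    max 0 (min 1 (min v ((h ⟨t - 1, Nat.sub_lt ht one_pos⟩).2 +
      Real.sqrt ((1 / (T : ℝ) +
        ∑ s : Fin (t - 1), |(h ⟨s.1 + 1, by have := s.isLt; omega⟩).2
          - (h ⟨s.1, by have := s.isLt; omega⟩).2|) / (T : ℝ)))))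
  else 0

lemma myBid_mem (T t : ℕ) (h : Fin t → ℝ × ℝ) (v : ℝ) :
    myBid T t h v ∈ Set.Icc (0:ℝ) 1 := by
  unfold myBid
  split_ifs
  · constructor
    · exact le_max_left _ _
    · exact max_le (by norm_num) (min_le_left _ _)
  · exact ⟨le_refl 0, by norm_num⟩

lemma myBid_measurable (T t : ℕ) :
    Measurable fun p : (Fin t → ℝ × ℝ) × ℝ × Unit => myBid T t p.1 p.2.1 := by
  rcases Nat.eq_zero_or_pos t with h | h
  · subst h
    simp only [myBid, dif_neg (lt_irrefl 0)]
    exact measurable_const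
  · simp only [myBid, dif_pos h]
    apply Measurable.max measurable_const
    apply Measurable.min measurable_const
    apply Measurable.min (measurable_fst.comp measurable_snd)
    apply Measurable.add
    · exact (measurable_snd.comp ((measurable_pi_apply _).comp measurable_fst))
    · apply Measurable.sqrt
      apply Measurable.div_const
      apply Measurable.add measurable_const
      apply Finset.measurable_sum
      intro s _
      apply Measurable.abs
      apply Measurable.sub <;>
        exact (measurable_snd.comp ((measurable_pi_apply _).comp measurable_fst))

/-- The deterministic policy (trivial randomness). -/
noncomputable def myPolicy (T : ℕ) : BidPolicy T where
  Ω := Unit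
  μ := MeasureTheory.Measure.dirac ()
  isProb := inferInstance
  bid := fun t h v _ => myBid T t h v
  bid_mem := fun t h v _ => myBid_mem T t h v
  bid_measurable := fun t => myBid_measurable T t

lemma myPolicy_regret (T : ℕ) (v m : ℕ → ℝ) :
    (myPolicy T).expRegret v m = ∑ t ∈ Finset.range T,
      (max (v t - m t) 0 -
        fpaReward (myBid T t (fun s : Fin t => (v s, m s)) (v t)) (v t) (m t)) := by
  have h : (myPolicy T).expRegret v m
      = ∫ _ω : Unit, (∑ t ∈ Finset.range T,
        (max (v t - m t) 0 -
          fpaReward (myBid T t (fun s : Fin t => (v s, m s)) (v t)) (v t) (m t)))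
        ∂(MeasureTheory.Measure.dirac ()) := rfl
  rw [h, MeasureTheory.integral_dirac]

lemma myBid_eq (T : ℕ) (v m : ℕ → ℝ) (j : ℕ) :
    myBid T (j+1) (fun s : Fin (j+1) => (v s, m s)) (v (j+1)) =
      max 0 (min 1 (min (v (j+1))
        (m j + Real.sqrt ((1/(T:ℝ) + totalVariation m (j+1)) / T)))) := by
  unfold myBid
  rw [dif_pos (Nat.succ_pos j)]
  show 0 ⊔ 1 ⊓ (v (j + 1) ⊓ (m j +
      Real.sqrt ((1 / (T:ℝ) + ∑ s : Fin j, |m (s.1 + 1) - m s.1|) / T))) = _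
  rw [Fin.sum_univ_eq_sum_range (fun s => |m (s + 1) - m s|) j]
  rfl

lemma sqrt_add_le' (a b : ℝ) (ha : 0 ≤ a) (hb : 0 ≤ b) :
    Real.sqrt (a + b) ≤ Real.sqrt a + Real.sqrt b := by
  have h : a + b ≤ (Real.sqrt a + Real.sqrt b) ^ 2 := by
    have ha' := Real.sq_sqrt ha
    have hb' := Real.sq_sqrt hb
    nlinarith [Real.sqrt_nonneg a, Real.sqrt_nonneg b,
      mul_nonneg (Real.sqrt_nonneg a) (Real.sqrt_nonneg b)]
  calc Real.sqrt (a + b) ≤ Real.sqrt ((Real.sqrt a + Real.sqrt b) ^ 2) :=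
        Real.sqrt_le_sqrt h
    _ = Real.sqrt a + Real.sqrt b := Real.sqrt_sq (by positivity)

/-- Per-round regret bound for the bid `min v (p + δ)`. -/
lemma perRound (v m p δ : ℝ) (hv : v ∈ Set.Icc (0:ℝ) 1) (hm : m ∈ Set.Icc (0:ℝ) 1)
    (hδ : 0 ≤ δ) :
    max (v - m) 0 - fpaReward (min v (p + δ)) v m ≤
      δ + |m - p| + (if δ < |m - p| then (1:ℝ) else 0) := by
  obtain ⟨hv0, hv1⟩ := hv
  obtain ⟨hm0, hm1⟩ := hm
  set b := min v (p + δ) with hb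
  have habs : p - m ≤ |m - p| := by rw [abs_sub_comm]; exact le_abs_self _
  have habs0 : (0:ℝ) ≤ |m - p| := abs_nonneg _
  unfold fpaReward
  by_cases hmb : m ≤ b
  · rw [if_pos hmb]
    have hbv : b ≤ v := min_le_left _ _
    have hbc : b ≤ p + δ := min_le_right _ _
    have hmax : max (v - m) 0 = v - m := max_eq_left (by linarith)
    rw [hmax]
    split_ifs <;> linarith
  · rw [if_neg hmb]
    push_neg at hmb
    by_cases hvm : v ≤ m
    · have hmax : max (v - m) 0 = 0 := max_eq_right (by linarith)
      rw [hmax]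
      split_ifs <;> linarith
    · push_neg at hvm
      have hpd : p + δ < m := by
        by_contra hc
        push_neg at hc
        have : m ≤ b := le_min (le_of_lt hvm) hc
        linarith
      have hind : δ < |m - p| := by
        have : m - p ≤ |m - p| := le_abs_self _
        linarith
      rw [if_pos hind]
      have hmax : max (v - m) 0 = v - m := max_eq_left (by linarith)
      rw [hmax]
      linarith

/-- Key indicator bound: if the step exceeds the threshold, then the square root of the
running variation increases by at least `1/(2√(2T))`. -/
lemma indBound (Tr x a : ℝ) (hT : 1 ≤ Tr) (hx : 1 / Tr ≤ x)
    (ha : Real.sqrt (x / Tr) < a) :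
    1 ≤ 2 * Real.sqrt 2 * Real.sqrt Tr * (Real.sqrt (x + a) - Real.sqrt x) := by
  have hT0 : (0:ℝ) < Tr := by linarith
  have hx0 : 0 < x := lt_of_lt_of_le (by positivity) hx
  have ha0 : 0 < a := lt_of_le_of_lt (Real.sqrt_nonneg _) ha
  have hxa : x < Tr * a ^ 2 := by
    have := (Real.sqrt_lt' ha0).mp ha
    calc x = (x / Tr) * Tr := by field_simp
    _ < a ^ 2 * Tr := by exact mul_lt_mul_of_pos_right this hT0
    _ = Tr * a ^ 2 := by ring
  have haT : 1 < a * Tr := by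
    have h1 : (1 / Tr) ≤ Real.sqrt (x / Tr) := by
      rw [Real.le_sqrt' (by positivity)]
      calc (1 / Tr) ^ 2 = (1 / Tr) * (1 / Tr) := sq (1 / Tr) ▸ by ring
      _ ≤ x * (1 / Tr) := mul_le_mul_of_nonneg_right hx (by positivity)
      _ = x / Tr := by ring
    have h2 : 1 / Tr < a := lt_of_le_of_lt h1 ha
    calc (1:ℝ) = (1 / Tr) * Tr := by field_simp
    _ < a * Tr := mul_lt_mul_of_pos_right h2 hT0
  have haa : a < Tr * a ^ 2 := by nlinarith
  set s0 := Real.sqrt x with hs0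
  set s1 := Real.sqrt (x + a) with hs1
  set u := Real.sqrt 2 * Real.sqrt Tr with hu
  have hs0n : 0 ≤ s0 := Real.sqrt_nonneg _
  have hs1n : 0 ≤ s1 := Real.sqrt_nonneg _
  have hun : 0 ≤ u := by positivity
  have hs0sq : s0 ^ 2 = x := Real.sq_sqrt hx0.le
  have hs1sq : s1 ^ 2 = x + a := Real.sq_sqrt (by linarith)
  have husq : u ^ 2 = 2 * Tr := by
    rw [hu, mul_pow, Real.sq_sqrt (by norm_num : (0:ℝ) ≤ 2), Real.sq_sqrt hT0.le]
  have hs1u : s1 < u * a := by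
    have h1 : s1 ^ 2 < (u * a) ^ 2 := by
      rw [hs1sq, mul_pow, husq]; nlinarith
    exact lt_of_pow_lt_pow_left₀ 2 (by positivity) h1
  have h01 : s0 < s1 := by
    have : s0 ^ 2 < s1 ^ 2 := by rw [hs0sq, hs1sq]; linarith
    exact lt_of_pow_lt_pow_left₀ 2 hs1n this
  have hprod : (s1 - s0) * (s1 + s0) = a := by nlinarith
  show 1 ≤ 2 * Real.sqrt 2 * Real.sqrt Tr * (s1 - s0)
  have h2u : 2 * Real.sqrt 2 * Real.sqrt Tr = 2 * u := by rw [hu]; ring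
  rw [h2u]
  nlinarith [mul_pos (sub_pos.mpr h01) (mul_pos (lt_of_le_of_lt hs0n h01) ha0)]

noncomputable def dStep (T : ℕ) (m : ℕ → ℝ) (j : ℕ) : ℝ :=
  Real.sqrt ((1/(T:ℝ) + totalVariation m (j+1)) / T)

/-- Parameter-free upper bound under the temporal variation measure: there is a single
policy (not knowing `V_T`) whose expected dynamic regret on every sequence in `[0,1]²`
is `O(max {√(T·V_T), 1})` up to polylogarithmic factors in `T`. -/
theorem adaptive_variation_upper_bound :
    ∃ C : ℝ, 0 < C ∧ ∃ k : ℕ, ∀ T : ℕ, 2 ≤ T → ∃ π : BidPolicy T,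
      ∀ v m : ℕ → ℝ,
        (∀ t < T, v t ∈ Set.Icc (0:ℝ) 1) → (∀ t < T, m t ∈ Set.Icc (0:ℝ) 1) →
        π.expRegret v m ≤
          C * max (Real.sqrt ((T : ℝ) * totalVariation m T)) 1 *
            (1 + Real.log T) ^ k := by
  refine ⟨100, by norm_num, 0, fun T hT => ⟨myPolicy T, fun v m hv hm => ?_⟩⟩
  have hT2 : (2:ℝ) ≤ (T:ℝ) := by exact_mod_cast hT
  have hT0 : (0:ℝ) < T := by linarith
  have hT1 : (1:ℝ) ≤ T := by linarith
  have hN : (T - 1) + 1 = T := by omega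
  set N := T - 1 with hNdef
  set V := totalVariation m T with hVdef
  have hVnn : 0 ≤ V := Finset.sum_nonneg fun _ _ => abs_nonneg _
  have htvnn : ∀ j, 0 ≤ totalVariation m j :=
    fun j => Finset.sum_nonneg fun _ _ => abs_nonneg _
  have hystep : ∀ j : ℕ,
      totalVariation m (j+2) = totalVariation m (j+1) + |m (j+1) - m j| := by
    intro j
    simp only [totalVariation]
    rw [show j + 2 - 1 = j + 1 from rfl, show j + 1 - 1 = j from rfl,
      Finset.sum_range_succ]
  have hyle : ∀ j < N, totalVariation m (j+1) ≤ V := by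
    intro j hj
    rw [hVdef]
    simp only [totalVariation, Nat.add_sub_cancel]
    apply Finset.sum_le_sum_of_subset_of_nonneg
    · exact Finset.range_subset_range.mpr (by omega)
    · exact fun i _ _ => abs_nonneg _
  rw [myPolicy_regret]
  -- per-round bound for rounds 1..T-1
  have hround : ∀ j ∈ Finset.range N,
      max (v (j+1) - m (j+1)) 0 -
        fpaReward (myBid T (j+1) (fun s : Fin (j+1) => (v s, m s)) (v (j+1)))
          (v (j+1)) (m (j+1)) ≤
      dStep T m j + |m (j+1) - m j| +
        (if dStep T m j < |m (j+1) - m j| then (1:ℝ) else 0) := by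
    intro j hj
    rw [Finset.mem_range] at hj
    have hj1 : j + 1 < T := by omega
    have hvj := hv (j+1) hj1
    have hmj1 := hm (j+1) hj1
    have hmj := hm j (by omega)
    have hdnn : 0 ≤ dStep T m j := Real.sqrt_nonneg _
    rw [myBid_eq]
    have hclamp : max 0 (min 1 (min (v (j+1)) (m j + dStep T m j))) =
        min (v (j+1)) (m j + dStep T m j) := by
      have h0 : (0:ℝ) ≤ min (v (j+1)) (m j + dStep T m j) :=
        le_min hvj.1 (by linarith [hmj.1])
      have h1 : min (v (j+1)) (m j + dStep T m j) ≤ 1 :=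
        le_trans (min_le_left _ _) hvj.2
      rw [min_eq_right h1, max_eq_right h0]
    rw [show Real.sqrt ((1/(T:ℝ) + totalVariation m (j+1)) / T) = dStep T m j from rfl,
      hclamp]
    exact perRound (v (j+1)) (m (j+1)) (m j) (dStep T m j) hvj hmj1 hdnn
  -- regret at round 0 is ≤ 1
  have hρ0 : max (v 0 - m 0) 0 -
      fpaReward (myBid T 0 (fun s : Fin 0 => (v s, m s)) (v 0)) (v 0) (m 0) ≤ 1 := by
    have hv0 := hv 0 (by omega)
    have hm0 := hm 0 (by omega)
    have hb0 : myBid T 0 (fun s : Fin 0 => (v s, m s)) (v 0) = 0 := by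
      simp [myBid]
    rw [hb0]
    unfold fpaReward
    split_ifs with h
    · have : max (v 0 - m 0) 0 ≤ 1 + (v 0 - 0) :=
        max_le (by linarith [hm0.1, hv0.2]) (by linarith [hv0.1])
      linarith
    · have : max (v 0 - m 0) 0 ≤ 1 :=
        max_le (by linarith [hm0.1, hv0.2]) (by norm_num)
      linarith
  -- split off round 0
  have hsplit : ∑ t ∈ Finset.range T,
      (max (v t - m t) 0 -
        fpaReward (myBid T t (fun s : Fin t => (v s, m s)) (v t)) (v t) (m t)) =
      (∑ j ∈ Finset.range N,
        (max (v (j+1) - m (j+1)) 0 -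
          fpaReward (myBid T (j+1) (fun s : Fin (j+1) => (v s, m s)) (v (j+1)))
            (v (j+1)) (m (j+1)))) +
      (max (v 0 - m 0) 0 -
        fpaReward (myBid T 0 (fun s : Fin 0 => (v s, m s)) (v 0)) (v 0) (m 0)) := by
    rw [← hN, Finset.sum_range_succ']
  rw [hsplit]
  have hsum1 : ∑ j ∈ Finset.range N,
      (max (v (j+1) - m (j+1)) 0 -
        fpaReward (myBid T (j+1) (fun s : Fin (j+1) => (v s, m s)) (v (j+1)))
          (v (j+1)) (m (j+1))) ≤
      ∑ j ∈ Finset.range N, (dStep T m j + |m (j+1) - m j| +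
        (if dStep T m j < |m (j+1) - m j| then (1:ℝ) else 0)) :=
    Finset.sum_le_sum hround
  -- bound on the sum of thresholds
  have hSd : ∑ j ∈ Finset.range N, dStep T m j ≤ 1 + Real.sqrt (T * V) := by
    have h1 : ∀ j ∈ Finset.range N, dStep T m j ≤ Real.sqrt ((1/(T:ℝ) + V) / T) := by
      intro j hj
      rw [Finset.mem_range] at hj
      unfold dStep
      apply Real.sqrt_le_sqrt
      have h2 := hyle j hj
      exact div_le_div_of_nonneg_right (by linarith) hT0.le
    calc ∑ j ∈ Finset.range N, dStep T m j
        ≤ ∑ _j ∈ Finset.range N, Real.sqrt ((1/(T:ℝ) + V) / T) :=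
          Finset.sum_le_sum h1
      _ = (N:ℝ) * Real.sqrt ((1/(T:ℝ) + V) / T) := by
          rw [Finset.sum_const, Finset.card_range, nsmul_eq_mul]
      _ ≤ (T:ℝ) * Real.sqrt ((1/(T:ℝ) + V) / T) := by
          apply mul_le_mul_of_nonneg_right ?_ (Real.sqrt_nonneg _)
          exact Nat.cast_le.mpr (Nat.sub_le T 1)
      _ = Real.sqrt ((T:ℝ)^2 * ((1/(T:ℝ) + V) / T)) := by
          rw [Real.sqrt_mul (by positivity), Real.sqrt_sq hT0.le]
      _ = Real.sqrt (1 + T * V) := by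
          congr 1
          field_simp
      _ ≤ 1 + Real.sqrt (T * V) := by
          have h := sqrt_add_le' 1 ((T:ℝ) * V) one_pos.le (by positivity)
          simpa using h
  -- sum of variations
  have hSv : ∑ j ∈ Finset.range N, |m (j+1) - m j| = V := by
    rw [hVdef]
    simp only [totalVariation]
    rfl
  have hVle : V ≤ Real.sqrt (T * V) := by
    have hVT : V ≤ (T:ℝ) := by
      rw [← hSv]
      calc ∑ j ∈ Finset.range N, |m (j+1) - m j|
          ≤ ∑ _j ∈ Finset.range N, (1:ℝ) := by
            apply Finset.sum_le_sum
            intro j hj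
            rw [Finset.mem_range] at hj
            have h1 := hm j (by omega)
            have h2 := hm (j+1) (by omega)
            rw [abs_le]
            exact ⟨by linarith [h1.2, h2.1], by linarith [h1.1, h2.2]⟩
        _ = (N:ℝ) := by simp
        _ ≤ (T:ℝ) := Nat.cast_le.mpr (Nat.sub_le T 1)
    calc V = Real.sqrt (V^2) := (Real.sqrt_sq hVnn).symm
      _ ≤ Real.sqrt (T * V) := Real.sqrt_le_sqrt (by nlinarith)
  -- sum of indicators: telescoping argument
  have hSind : ∑ j ∈ Finset.range N,
      (if dStep T m j < |m (j+1) - m j| then (1:ℝ) else 0) ≤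
      2 * Real.sqrt 2 * (1 + Real.sqrt (T * V)) := by
    set f : ℕ → ℝ := fun j => Real.sqrt (1/(T:ℝ) + totalVariation m (j+1)) with hf
    have hterm : ∀ j ∈ Finset.range N,
        (if dStep T m j < |m (j+1) - m j| then (1:ℝ) else 0) ≤
        2 * Real.sqrt 2 * Real.sqrt T * (f (j+1) - f j) := by
      intro j _
      have hmono : f j ≤ f (j+1) := by
        simp only [hf]
        apply Real.sqrt_le_sqrt
        rw [hystep j]
        have := abs_nonneg (m (j+1) - m j)
        linarith
      split_ifs with h
      · have hx : 1/(T:ℝ) ≤ 1/(T:ℝ) + totalVariation m (j+1) :=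
          le_add_of_nonneg_right (htvnn _)
        have hib := indBound T (1/(T:ℝ) + totalVariation m (j+1))
          (|m (j+1) - m j|) hT1 hx h
        have hfj : f (j+1) = Real.sqrt (1/(T:ℝ) + totalVariation m (j+1) +
            |m (j+1) - m j|) := by
          simp only [hf]
          rw [hystep j, add_assoc]
        have hfj0 : f j = Real.sqrt (1/(T:ℝ) + totalVariation m (j+1)) := by
          simp only [hf]
        rw [hfj, hfj0]
        exact hib
      · have hc : (0:ℝ) ≤ 2 * Real.sqrt 2 * Real.sqrt T := by positivity
        exact mul_nonneg hc (by linarith)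
    calc ∑ j ∈ Finset.range N,
        (if dStep T m j < |m (j+1) - m j| then (1:ℝ) else 0)
        ≤ ∑ j ∈ Finset.range N, 2 * Real.sqrt 2 * Real.sqrt T * (f (j+1) - f j) :=
          Finset.sum_le_sum hterm
      _ = 2 * Real.sqrt 2 * Real.sqrt T * (f N - f 0) := by
          rw [← Finset.mul_sum, Finset.sum_range_sub f]
      _ ≤ 2 * Real.sqrt 2 * Real.sqrt T * f N := by
          apply mul_le_mul_of_nonneg_left ?_ (by positivity)
          simp only [hf]
          linarith [Real.sqrt_nonneg (1/(T:ℝ) + totalVariation m (0+1))]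
      _ = 2 * Real.sqrt 2 * Real.sqrt ((T:ℝ) * (1/(T:ℝ) + totalVariation m (N+1))) := by
          rw [Real.sqrt_mul hT0.le]
          ring
      _ = 2 * Real.sqrt 2 * Real.sqrt (1 + T * V) := by
          rw [hN, ← hVdef]
          congr 1
          rw [mul_add, mul_one_div, div_self hT0.ne']
      _ ≤ 2 * Real.sqrt 2 * (1 + Real.sqrt (T * V)) := by
          apply mul_le_mul_of_nonneg_left ?_ (by positivity)
          have h := sqrt_add_le' 1 ((T:ℝ) * V) one_pos.le (by positivity)
          simpa using h
  -- combine everything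
  rw [pow_zero, mul_one]
  have hM1 : (1:ℝ) ≤ max (Real.sqrt ((T:ℝ) * V)) 1 := le_max_right _ _
  have hMs : Real.sqrt ((T:ℝ) * V) ≤ max (Real.sqrt ((T:ℝ) * V)) 1 := le_max_left _ _
  have hsq2 : Real.sqrt 2 ≤ 2 := by
    calc Real.sqrt 2 ≤ Real.sqrt 4 := Real.sqrt_le_sqrt (by norm_num)
      _ = 2 := by
        rw [show (4:ℝ) = 2^2 by norm_num, Real.sqrt_sq (by norm_num)]
  have hsqnn : 0 ≤ Real.sqrt ((T:ℝ) * V) := Real.sqrt_nonneg _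
  have hdistrib : ∑ j ∈ Finset.range N, (dStep T m j + |m (j+1) - m j| +
        (if dStep T m j < |m (j+1) - m j| then (1:ℝ) else 0)) =
      (∑ j ∈ Finset.range N, dStep T m j) +
      (∑ j ∈ Finset.range N, |m (j+1) - m j|) +
      (∑ j ∈ Finset.range N,
        (if dStep T m j < |m (j+1) - m j| then (1:ℝ) else 0)) := by
    rw [Finset.sum_add_distrib, Finset.sum_add_distrib]
  have h2s : 2 * Real.sqrt 2 * (1 + Real.sqrt ((T:ℝ) * V)) ≤
      4 * (1 + Real.sqrt ((T:ℝ) * V)) := by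
    have : (0:ℝ) ≤ 1 + Real.sqrt ((T:ℝ) * V) := by linarith
    nlinarith [Real.sqrt_nonneg (2:ℝ)]
  have hmain : (∑ j ∈ Finset.range N,
      (max (v (j+1) - m (j+1)) 0 -
        fpaReward (myBid T (j+1) (fun s : Fin (j+1) => (v s, m s)) (v (j+1)))
          (v (j+1)) (m (j+1)))) +
      (max (v 0 - m 0) 0 -
        fpaReward (myBid T 0 (fun s : Fin 0 => (v s, m s)) (v 0)) (v 0) (m 0)) ≤
      (1 + Real.sqrt ((T:ℝ) * V)) + V + (2 * Real.sqrt 2 * (1 + Real.sqrt ((T:ℝ) * V)))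
        + 1 := by
    have := hsum1
    rw [hdistrib] at this
    rw [hSv] at this
    linarith [hSd, hSind, hρ0]
  calc _ ≤ (1 + Real.sqrt ((T:ℝ) * V)) + V +
        (2 * Real.sqrt 2 * (1 + Real.sqrt ((T:ℝ) * V))) + 1 := hmain
    _ ≤ 100 * max (Real.sqrt ((T:ℝ) * V)) 1 := by linarith [hVle, h2s]
end

section
/- There exist constants C > 0 and k ∈ ℕ such that for every integer T ≥ 2 and every real V > 0 there exists a randomized bidding policy π over T rounds (which may depend on V) such that for every sequence (v_t, m_t)_{t=1}^T ⊂ [0,1]^2 with Σ_{t=2}^T |m_t − m_{t−1}| ≤ V, the expected dynamic regret of π on this sequence is at most C · max{√(T·V), 1} · (1 + log T)^k; in particular, restarting a static-regret-optimal procedure with batch size of order √(T/V) achieves dynamic regret of order √(T·V) up to polylogarithmic factors when V is known. -/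
noncomputable def detPolicy (T : ℕ) (ε : ℝ) : BidPolicy T where
  Ω := Unit
  μ := MeasureTheory.Measure.dirac ()
  isProb := by infer_instance
  bid t h v _ :=
    if h0 : t = 0 then 0
    else max 0 (min 1 (min v ((h ⟨t - 1, by omega⟩).2 + ε)))
  bid_mem := by
    intro t h v ω
    by_cases h0 : t = 0
    · simp [h0]
    · simp only [dif_neg h0, Set.mem_Icc]
      refine ⟨le_max_left _ _, max_le zero_le_one (min_le_left _ _)⟩
  bid_measurable := by
    intro t
    by_cases h0 : t = 0
    · simp only [dif_pos h0]
      exact measurable_const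
    · simp only [dif_neg h0]
      apply Measurable.max measurable_const
      apply Measurable.min measurable_const
      apply Measurable.min
      · exact measurable_fst.comp measurable_snd
      · exact ((measurable_snd.comp ((measurable_pi_apply _).comp measurable_fst)).add_const ε)

lemma round_bound (ε v m' m : ℝ) (hε : 0 < ε) (hv : v ∈ Set.Icc (0:ℝ) 1)
    (hm : m ∈ Set.Icc (0:ℝ) 1) :
    max (v - m) 0 - fpaReward (min v (m' + ε)) v m ≤ ε + |m - m'| + |m - m'| / ε := by
  obtain ⟨hv0, hv1⟩ := hv
  obtain ⟨hm0, hm1⟩ := hm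
  have habs : 0 ≤ |m - m'| := abs_nonneg _
  have habsε : 0 ≤ |m - m'| / ε := by positivity
  unfold fpaReward
  by_cases hwin : m ≤ min v (m' + ε)
  · rw [if_pos hwin]
    by_cases hvm : m ≤ v
    · have h1 : max (v - m) 0 = v - m := max_eq_left (by linarith)
      rw [h1]
      have h2 : min v (m' + ε) ≤ m' + ε := min_le_right _ _
      have h3 : m' - m ≤ |m - m'| := by
        rw [abs_sub_comm]; exact le_abs_self _
      linarith
    · push_neg at hvm
      have h1 : max (v - m) 0 = 0 := max_eq_right (by linarith)
      have h2 : min v (m' + ε) ≤ v := min_le_left _ _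
      rw [h1]; linarith
  · rw [if_neg hwin]
    push_neg at hwin
    by_cases hvm : m ≤ v
    · have h2 : m' + ε < m := by
        rcases min_cases v (m' + ε) with ⟨heq, _⟩ | ⟨heq, _⟩
        · rw [heq] at hwin; linarith
        · rw [heq] at hwin; exact hwin
      have h3 : ε < |m - m'| := by
        rw [abs_of_pos (by linarith)]; linarith
      have h4 : (1:ℝ) ≤ |m - m'| / ε := by
        rw [le_div_iff₀ hε]; linarith
      have h5 : max (v - m) 0 ≤ 1 := max_le (by linarith) zero_le_one
      linarith
    · push_neg at hvm
      have h1 : max (v - m) 0 = 0 := max_eq_right (by linarith)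
      rw [h1]; linarith

lemma round0_bound (v m : ℝ) (hv : v ∈ Set.Icc (0:ℝ) 1) (hm : m ∈ Set.Icc (0:ℝ) 1) :
    max (v - m) 0 - fpaReward 0 v m ≤ 1 := by
  obtain ⟨hv0, hv1⟩ := hv
  obtain ⟨hm0, hm1⟩ := hm
  have h5 : max (v - m) 0 ≤ 1 := max_le (by linarith) zero_le_one
  unfold fpaReward
  split <;> linarith


/-- Known-variation upper bound: for each known budget `V > 0` there is a policy
(e.g., restarting a static-regret-optimal procedure with batch size of order
`√(T/V)`) whose expected dynamic regret on every sequence in `[0,1]²` with temporal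
variation at most `V` is `O(max {√(T·V), 1})` up to polylogarithmic factors in `T`. -/
theorem known_variation_upper_bound :
    ∃ C : ℝ, 0 < C ∧ ∃ k : ℕ, ∀ T : ℕ, 2 ≤ T → ∀ V : ℝ, 0 < V →
      ∃ π : BidPolicy T,
        ∀ v m : ℕ → ℝ,
          (∀ t < T, v t ∈ Set.Icc (0:ℝ) 1) → (∀ t < T, m t ∈ Set.Icc (0:ℝ) 1) →
          totalVariation m T ≤ V →
          π.expRegret v m ≤
            C * max (Real.sqrt ((T : ℝ) * V)) 1 * (1 + Real.log T) ^ k := by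
  refine ⟨4, by norm_num, 0, ?_⟩
  intro T hT V hV
  have hT0 : (0:ℝ) < T := by positivity
  set W : ℝ := min V (T:ℝ) with hWdef
  have hW : 0 < W := lt_min hV hT0
  have hWT : W ≤ (T:ℝ) := min_le_right _ _
  have hWV : W ≤ V := min_le_left _ _
  set ε : ℝ := Real.sqrt W / Real.sqrt T with hεdef
  have hsqT : (0:ℝ) < Real.sqrt T := Real.sqrt_pos.mpr hT0
  have hsqW : (0:ℝ) < Real.sqrt W := Real.sqrt_pos.mpr hW
  have hε : 0 < ε := by positivity
  refine ⟨detPolicy T ε, ?_⟩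
  intro v m hv hm hTV
  -- the regret is the deterministic sum
  set g : ℕ → ℝ := fun t =>
    max (v t - m t) 0 - fpaReward ((detPolicy T ε).bids v m t ()) (v t) (m t) with hgdef
  have hreg : (detPolicy T ε).expRegret v m = ∑ t ∈ Finset.range T, g t := by
    unfold BidPolicy.expRegret
    exact MeasureTheory.integral_dirac _ ()
  -- bid values
  have hbid0 : (detPolicy T ε).bids v m 0 () = 0 := by
    simp [BidPolicy.bids, detPolicy]
  have hbid : ∀ t, t < T - 1 → (detPolicy T ε).bids v m (t + 1) () =
      min (v (t + 1)) (m t + ε) := by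
    intro t ht
    have h1 : t + 1 < T := by omega
    have h0 : t < T := by omega
    unfold BidPolicy.bids detPolicy
    dsimp only
    rw [dif_neg (Nat.succ_ne_zero t)]
    simp only [Nat.add_sub_cancel]
    have hx0 : 0 ≤ min (v (t + 1)) (m t + ε) :=
      le_min (hv _ h1).1 (by have := (hm _ h0).1; linarith)
    have hx1 : min (v (t + 1)) (m t + ε) ≤ 1 :=
      le_trans (min_le_left _ _) (hv _ h1).2
    rw [min_eq_right hx1, max_eq_right hx0]
  -- split the sum
  have hT1 : T - 1 + 1 = T := by omega
  have hsplit : ∑ t ∈ Finset.range T, g t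
      = (∑ t ∈ Finset.range (T - 1), g (t + 1)) + g 0 := by
    conv_lhs => rw [← hT1]
    rw [Finset.sum_range_succ']
  -- bound round 0
  have hg0 : g 0 ≤ 1 := by
    rw [hgdef]; simp only [hbid0]
    exact round0_bound _ _ (hv 0 (by omega)) (hm 0 (by omega))
  -- bound each later round
  have hgt : ∀ t ∈ Finset.range (T - 1),
      g (t + 1) ≤ ε + |m (t + 1) - m t| + |m (t + 1) - m t| / ε := by
    intro t ht
    rw [Finset.mem_range] at ht
    rw [hgdef]
    simp only [hbid t ht]
    exact round_bound ε _ _ _ hε (hv _ (by omega)) (hm _ (by omega))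
  have hsum : ∑ t ∈ Finset.range (T - 1), g (t + 1)
      ≤ ((T - 1 : ℕ) : ℝ) * ε + totalVariation m T + totalVariation m T / ε := by
    calc ∑ t ∈ Finset.range (T - 1), g (t + 1)
        ≤ ∑ t ∈ Finset.range (T - 1),
            (ε + |m (t + 1) - m t| + |m (t + 1) - m t| / ε) :=
          Finset.sum_le_sum hgt
      _ = ((T - 1 : ℕ) : ℝ) * ε + totalVariation m T + totalVariation m T / ε := by
          rw [Finset.sum_add_distrib, Finset.sum_add_distrib, Finset.sum_const,
            ← Finset.sum_div]
          simp [totalVariation, nsmul_eq_mul]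
  -- total variation bounds
  have hS_T : totalVariation m T ≤ (T:ℝ) := by
    have h1 : totalVariation m T ≤ ∑ _t ∈ Finset.range (T - 1), (1:ℝ) := by
      apply Finset.sum_le_sum
      intro t ht
      rw [Finset.mem_range] at ht
      have h1 := hm (t + 1) (by omega)
      have h2 := hm t (by omega)
      rw [abs_le]
      constructor <;> [linarith [h1.1, h2.2]; linarith [h1.2, h2.1]]
    rw [Finset.sum_const, Finset.card_range, nsmul_eq_mul, mul_one] at h1
    calc totalVariation m T ≤ ((T - 1 : ℕ) : ℝ) := h1
      _ ≤ (T : ℝ) := by exact_mod_cast Nat.sub_le T 1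
  have hSW : totalVariation m T ≤ W := le_min hTV hS_T
  -- arithmetic with ε
  have hTmul : (T:ℝ) * ε = Real.sqrt T * Real.sqrt W := by
    have h := Real.mul_self_sqrt hT0.le
    rw [hεdef, mul_div_assoc', div_eq_iff hsqT.ne']
    linear_combination (-Real.sqrt W) * h
  have hWdiv : W / ε = Real.sqrt T * Real.sqrt W := by
    rw [hεdef, div_div_eq_mul_div, mul_comm, mul_div_assoc, Real.div_sqrt]
  have hWle : W ≤ Real.sqrt T * Real.sqrt W := by
    have h1 : W = Real.sqrt W * Real.sqrt W := (Real.mul_self_sqrt hW.le).symm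
    have h2 : Real.sqrt W ≤ Real.sqrt T := Real.sqrt_le_sqrt hWT
    nlinarith
  set M : ℝ := max (Real.sqrt ((T:ℝ) * V)) 1 with hMdef
  have hM1 : (1:ℝ) ≤ M := le_max_right _ _
  have hkey : Real.sqrt T * Real.sqrt W ≤ M := by
    have h1 : Real.sqrt T * Real.sqrt W = Real.sqrt ((T:ℝ) * W) :=
      (Real.sqrt_mul hT0.le W).symm
    have h2 : Real.sqrt ((T:ℝ) * W) ≤ Real.sqrt ((T:ℝ) * V) :=
      Real.sqrt_le_sqrt (by nlinarith)
    rw [h1]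
    exact le_trans h2 (le_max_left _ _)
  -- cast bound
  have hcast : ((T - 1 : ℕ) : ℝ) * ε ≤ (T:ℝ) * ε := by
    apply mul_le_mul_of_nonneg_right _ hε.le
    exact_mod_cast Nat.sub_le T 1
  have hSdiv : totalVariation m T / ε ≤ W / ε := by gcongr
  rw [hreg, hsplit, pow_zero, mul_one]
  linarith [hsum, hg0, hcast, hSW, hSdiv, hTmul.le, hWdiv.le, hWle, hkey, hM1]
end

section
/- There exist constants C > 0 and k ∈ ℕ such that for every integer T ≥ 2 there exists a single randomized bidding policy π over T rounds such that for every sequence (v_t, m_t)_{t=1}^T ⊂ [0,1]^2 with V_T ≥ log T, the expected dynamic regret of π on this sequence is at most C · min{√(T·V_T), L_T} · (1 + log T)^k, where V_T = Σ_{t=2}^T |m_t − m_{t−1}| and L_T = Σ_{t=2}^T 𝟙[m_t ≠ m_{t−1}] (best-of-both-worlds dynamic regret). -/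
/-! ### Auxiliary definitions: a Hedge policy over margin experts -/

noncomputable def clamp01 (x : ℝ) : ℝ := max 0 (min 1 x)

/-- bid with safety margin ε above previous maximum pm, capped at value v -/
noncomputable def bidOf (ε pm v : ℝ) : ℝ := clamp01 (min v (pm + ε))

/-- instantaneous regret (loss) of bidding `bidOf ε pm v` -/
noncomputable def stepLoss (ε pm v m : ℝ) : ℝ :=
  max (v - m) 0 - fpaReward (bidOf ε pm v) v m

/-- margin of expert i -/
noncomputable def epsOf (i : ℕ) : ℝ := if i = 0 then 0 else (2:ℝ)⁻¹ ^ (i - 1)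

/-- exponential-weights probability from cumulative losses c, with K experts -/
noncomputable def pOf (K : ℕ) (c : ℕ → ℝ) (i : ℕ) : ℝ :=
  Real.exp (-(c i)) / ∑ j ∈ Finset.range K, Real.exp (-(c j))

/-- cumulative probability -/
noncomputable def cumOf (K : ℕ) (c : ℕ → ℝ) (j : ℕ) : ℝ :=
  ∑ i ∈ Finset.range j, pOf K c i

/-- previous m from a history of length t (1 if t = 0) -/
noncomputable def histPM (t : ℕ) (h : Fin t → ℝ × ℝ) : ℝ :=
  if ht : 0 < t then (h ⟨t - 1, by omega⟩).2 else 1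

/-- previous m at step s < t of a history -/
noncomputable def histPMs (t : ℕ) (h : Fin t → ℝ × ℝ) (s : Fin t) : ℝ :=
  if hs : 0 < (s : ℕ) then (h ⟨(s : ℕ) - 1, by omega⟩).2 else 1

/-- cumulative loss of expert i on a history -/
noncomputable def cumLoss (t : ℕ) (h : Fin t → ℝ × ℝ) (i : ℕ) : ℝ :=
  ∑ s : Fin t, stepLoss (epsOf i) (histPMs t h s) (h s).1 (h s).2

/-- the hedge bid: plays expert i when ω falls in [cum i, cum (i+1)) -/
noncomputable def hedgeBid (K t : ℕ) (h : Fin t → ℝ × ℝ) (v ω : ℝ) : ℝ :=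
  ∑ i ∈ Finset.range K,
    if cumOf K (cumLoss t h) i ≤ ω ∧ ω < cumOf K (cumLoss t h) (i + 1)
    then bidOf (epsOf i) (histPM t h) v else 0

/-- loss of expert i at round s of the sequence (v, m) -/
noncomputable def seqPM (m : ℕ → ℝ) (s : ℕ) : ℝ := if s = 0 then 1 else m (s - 1)

noncomputable def seqLoss (v m : ℕ → ℝ) (i s : ℕ) : ℝ :=
  stepLoss (epsOf i) (seqPM m s) (v s) (m s)

noncomputable def seqCum (v m : ℕ → ℝ) (t i : ℕ) : ℝ :=
  ∑ s ∈ Finset.range t, seqLoss v m i s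

/-! ### Basic lemmas -/

lemma clamp01_mem (x : ℝ) : clamp01 x ∈ Set.Icc (0:ℝ) 1 :=
  ⟨le_max_left _ _, max_le (by norm_num) (min_le_left _ _)⟩

lemma pOf_nonneg (K : ℕ) (c : ℕ → ℝ) (i : ℕ) : 0 ≤ pOf K c i :=
  div_nonneg (Real.exp_nonneg _) (Finset.sum_nonneg fun _ _ => Real.exp_nonneg _)

lemma cumOf_mono (K : ℕ) (c : ℕ → ℝ) : Monotone (cumOf K c) := by
  intro a b hab
  exact Finset.sum_le_sum_of_subset_of_nonneg (Finset.range_subset_range.2 hab)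
    (fun i _ _ => pOf_nonneg K c i)

lemma cumOf_zero (K : ℕ) (c : ℕ → ℝ) : cumOf K c 0 = 0 := by simp [cumOf]

lemma sumW_pos (K : ℕ) (hK : 0 < K) (c : ℕ → ℝ) :
    0 < ∑ j ∈ Finset.range K, Real.exp (-(c j)) :=
  Finset.sum_pos (fun j _ => Real.exp_pos _) (by simp [Finset.nonempty_range_iff]; omega)

lemma cumOf_K (K : ℕ) (hK : 0 < K) (c : ℕ → ℝ) : cumOf K c K = 1 := by
  rw [cumOf]
  rw [show (∑ i ∈ Finset.range K, pOf K c i)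
      = (∑ i ∈ Finset.range K, Real.exp (-(c i))) / (∑ j ∈ Finset.range K, Real.exp (-(c j)))
    from (Finset.sum_div _ _ _).symm]
  exact div_self (ne_of_gt (sumW_pos K hK c))

lemma cumOf_succ (K : ℕ) (c : ℕ → ℝ) (i : ℕ) :
    cumOf K c (i + 1) = cumOf K c i + pOf K c i := Finset.sum_range_succ _ _

/-- at most one sampling interval contains ω -/
lemma hedge_interval_unique (K : ℕ) (c : ℕ → ℝ) (ω : ℝ) {i j : ℕ}
    (hi : cumOf K c i ≤ ω ∧ ω < cumOf K c (i + 1))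
    (hj : cumOf K c j ≤ ω ∧ ω < cumOf K c (j + 1)) : i = j := by
  by_contra hne
  rcases Nat.lt_or_ge i j with h | h
  · exact absurd (le_trans (cumOf_mono K c (Nat.succ_le_of_lt h)) hj.1) (not_le.2 hi.2)
  · have hj' : j < i := lt_of_le_of_ne h (Ne.symm hne)
    exact absurd (le_trans (cumOf_mono K c (Nat.succ_le_of_lt hj')) hi.1) (not_le.2 hj.2)

/-- existence of the sampling interval for ω ∈ [0,1) -/
lemma hedge_interval_exists (K : ℕ) (hK : 0 < K) (c : ℕ → ℝ) {ω : ℝ}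
    (h0 : 0 ≤ ω) (h1 : ω < 1) :
    ∃ i < K, cumOf K c i ≤ ω ∧ ω < cumOf K c (i + 1) := by
  classical
  have hex : ∃ n, ω < cumOf K c (n + 1) := by
    refine ⟨K - 1, ?_⟩
    rw [show K - 1 + 1 = K by omega, cumOf_K K hK c]; exact h1
  let n := Nat.find hex
  refine ⟨n, ?_, ?_, Nat.find_spec hex⟩
  · have : n ≤ K - 1 := Nat.find_le (by
      rw [show K - 1 + 1 = K by omega, cumOf_K K hK c]; exact h1)
    omega
  · rcases Nat.eq_zero_or_pos n with h | h
    · rw [h, cumOf_zero]; exact h0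
    · have := Nat.find_min hex (show n - 1 < n by omega)
      rw [show n - 1 + 1 = n by omega] at this
      exact not_lt.1 this

lemma hedgeBid_mem (K t : ℕ) (h : Fin t → ℝ × ℝ) (v ω : ℝ) :
    hedgeBid K t h v ω ∈ Set.Icc (0:ℝ) 1 := by
  classical
  set c := cumLoss t h
  by_cases hex : ∃ i ∈ Finset.range K, cumOf K c i ≤ ω ∧ ω < cumOf K c (i + 1)
  · obtain ⟨i, hiK, hi⟩ := hex
    rw [hedgeBid, Finset.sum_eq_single_of_mem i hiK (fun j _ hji => by
      rw [if_neg]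
      intro hj
      exact hji (hedge_interval_unique K c ω hj hi))]
    rw [if_pos hi]
    exact clamp01_mem _
  · rw [hedgeBid, Finset.sum_eq_zero (fun j hj => by
      rw [if_neg]; intro hcond; exact hex ⟨j, hj, hcond⟩)]
    norm_num

/-! ### Loss bounds -/

lemma bidOf_eq {ε pm v : ℝ} (hε : 0 ≤ ε) (hpm : 0 ≤ pm) (hv0 : 0 ≤ v) (hv1 : v ≤ 1) :
    bidOf ε pm v = min v (pm + ε) := by
  rw [bidOf, clamp01, min_eq_right, max_eq_right]
  · exact le_min hv0 (by positivity)
  · exact le_trans (min_le_left _ _) hv1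

lemma stepLoss_mem {ε pm v m : ℝ} (hε : 0 ≤ ε) (hpm : 0 ≤ pm)
    (hv : v ∈ Set.Icc (0:ℝ) 1) (hm : m ∈ Set.Icc (0:ℝ) 1) :
    stepLoss ε pm v m ∈ Set.Icc (0:ℝ) 1 := by
  obtain ⟨hv0, hv1⟩ := hv; obtain ⟨hm0, hm1⟩ := hm
  rw [stepLoss, bidOf_eq hε hpm hv0 hv1]
  set b := min v (pm + ε) with hb
  have hb0 : 0 ≤ b := le_min hv0 (by positivity)
  have hbv : b ≤ v := min_le_left _ _
  rw [fpaReward]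
  constructor
  · split
    · rename_i hwin
      have : v - b ≤ max (v - m) 0 := le_max_of_le_left (by linarith)
      linarith
    · simp only [sub_zero]; positivity
  · split
    · have : max (v - m) 0 ≤ 1 := max_le (by linarith) (by norm_num)
      linarith
    · have : max (v - m) 0 ≤ 1 := max_le (by linarith) (by norm_num)
      linarith

lemma stepLoss_bound {ε pm v m : ℝ} (hε : 0 ≤ ε) (hpm0 : 0 ≤ pm) (hpm1 : pm ≤ 1)
    (hv : v ∈ Set.Icc (0:ℝ) 1) (hm : m ∈ Set.Icc (0:ℝ) 1) :
    stepLoss ε pm v m ≤ ε + |m - pm| + (if ε < |m - pm| then 1 else 0) := by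
  obtain ⟨hv0, hv1⟩ := hv; obtain ⟨hm0, hm1⟩ := hm
  have habs : 0 ≤ |m - pm| := abs_nonneg _
  rw [stepLoss, bidOf_eq hε hpm0 hv0 hv1]
  set b := min v (pm + ε) with hb
  have hbv : b ≤ v := min_le_left _ _
  rw [fpaReward]
  split
  · rename_i hwin
    have hmax : max (v - m) 0 = v - m := max_eq_left (by linarith)
    have hbpm : b ≤ pm + ε := min_le_right _ _
    have : pm - m ≤ |m - pm| := by
      rw [abs_sub_comm]; exact le_abs_self _
    have hite : (0:ℝ) ≤ (if ε < |m - pm| then 1 else 0) := by positivity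
    rw [hmax]; linarith
  · rename_i hlose
    push_neg at hlose
    by_cases hcase : v ≤ pm + ε
    · have hbe : b = v := min_eq_left hcase
      rw [hbe] at hlose
      have : max (v - m) 0 = 0 := max_eq_right (by linarith)
      have hite : (0:ℝ) ≤ (if ε < |m - pm| then 1 else 0) := by positivity
      rw [this]; linarith
    · push_neg at hcase
      have hbe : b = pm + ε := min_eq_right (le_of_lt hcase)
      rw [hbe] at hlose
      have h1 : ε < |m - pm| := by
        rw [abs_of_nonneg (by linarith : (0:ℝ) ≤ m - pm)]; linarith
      rw [if_pos h1]
      have : max (v - m) 0 ≤ 1 := max_le (by linarith) (by norm_num)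
      linarith

/-! ### Measurability -/

section Meas

variable {α : Type*} [MeasurableSpace α]

lemma measurable_bidOf {ε : ℝ} {pm v : α → ℝ} (hpm : Measurable pm) (hv : Measurable v) :
    Measurable fun x => bidOf ε (pm x) (v x) := by
  unfold bidOf clamp01
  exact measurable_const.max (measurable_const.min (hv.min (hpm.add_const ε)))

lemma measurable_stepLoss {ε : ℝ} {pm v m : α → ℝ}
    (hpm : Measurable pm) (hv : Measurable v) (hm : Measurable m) :
    Measurable fun x => stepLoss ε (pm x) (v x) (m x) := by
  have hb := measurable_bidOf (ε := ε) hpm hv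
  unfold stepLoss fpaReward
  exact ((hv.sub hm).max measurable_const).sub
    (Measurable.ite (measurableSet_le hm hb) (hv.sub hb) measurable_const)

lemma measurable_histPM (t : ℕ) : Measurable fun h : Fin t → ℝ × ℝ => histPM t h := by
  unfold histPM
  by_cases ht : 0 < t
  · simp only [dif_pos ht]
    exact (measurable_pi_apply _).snd
  · simp only [dif_neg ht]
    exact measurable_const

lemma measurable_histPMs (t : ℕ) (s : Fin t) :
    Measurable fun h : Fin t → ℝ × ℝ => histPMs t h s := by
  unfold histPMs
  by_cases hs : 0 < (s : ℕ)
  · simp only [dif_pos hs]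
    exact (measurable_pi_apply _).snd
  · simp only [dif_neg hs]
    exact measurable_const

lemma measurable_cumLoss (t : ℕ) (i : ℕ) :
    Measurable fun h : Fin t → ℝ × ℝ => cumLoss t h i := by
  unfold cumLoss
  exact Finset.measurable_sum _ (fun s _ =>
    measurable_stepLoss (measurable_histPMs t s)
      (measurable_pi_apply s).fst (measurable_pi_apply s).snd)

lemma measurable_cumOf (K t : ℕ) (j : ℕ) :
    Measurable fun h : Fin t → ℝ × ℝ => cumOf K (cumLoss t h) j := by
  unfold cumOf pOf
  refine Finset.measurable_sum _ (fun i _ => Measurable.div ?_ ?_)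
  · exact ((measurable_cumLoss t i).neg).exp
  · exact Finset.measurable_sum _ (fun j _ => ((measurable_cumLoss t j).neg).exp)

lemma measurable_hedgeBid (K t : ℕ) :
    Measurable fun p : (Fin t → ℝ × ℝ) × ℝ × ℝ => hedgeBid K t p.1 p.2.1 p.2.2 := by
  unfold hedgeBid
  refine Finset.measurable_sum _ (fun i _ => Measurable.ite ?_ ?_ measurable_const)
  · refine MeasurableSet.inter ?_ ?_
    · exact measurableSet_le ((measurable_cumOf K t i).comp measurable_fst)
        measurable_snd.snd
    · exact measurableSet_lt measurable_snd.snd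
        ((measurable_cumOf K t (i+1)).comp measurable_fst)
  · exact measurable_bidOf ((measurable_histPM t).comp measurable_fst) measurable_snd.fst

end Meas

/-! ### The Hedge master inequality -/

lemma exp_neg_chord {x : ℝ} (h0 : 0 ≤ x) (h1 : x ≤ 1) :
    Real.exp (-x) ≤ 1 - (1 - (Real.exp 1)⁻¹) * x := by
  have h := convexOn_exp.2 (Set.mem_univ (0:ℝ)) (Set.mem_univ (-1:ℝ))
    (by linarith : (0:ℝ) ≤ 1 - x) h0 (by ring)
  have e1 : (1 - x) • (0:ℝ) + x • (-1:ℝ) = -x := by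
    rw [smul_eq_mul, smul_eq_mul]; ring
  have e2 : (1 - x) • Real.exp 0 + x • Real.exp (-1) = 1 - (1 - (Real.exp 1)⁻¹) * x := by
    rw [smul_eq_mul, smul_eq_mul, Real.exp_zero, Real.exp_neg]; ring
  rw [e1, e2] at h
  exact h

theorem hedge_master (K T : ℕ) (hK : 0 < K) (ℓ : ℕ → ℕ → ℝ)
    (hℓ : ∀ i < K, ∀ s < T, ℓ i s ∈ Set.Icc (0:ℝ) 1) (i₀ : ℕ) (hi₀ : i₀ < K) :
    ∑ t ∈ Finset.range T,
        (∑ i ∈ Finset.range K,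
          pOf K (fun j => ∑ s ∈ Finset.range t, ℓ j s) i * ℓ i t)
      ≤ 2 * (Real.log K + ∑ t ∈ Finset.range T, ℓ i₀ t) := by
  set c : ℝ := 1 - (Real.exp 1)⁻¹ with hc
  have hexp2 : (2:ℝ) ≤ Real.exp 1 := by
    have := Real.add_one_le_exp (1:ℝ); linarith
  have hchalf : (1/2 : ℝ) ≤ c := by
    have h1 : (Real.exp 1)⁻¹ ≤ 1/2 := by
      rw [inv_le_comm₀ (Real.exp_pos 1) (by norm_num)]
      simpa using hexp2
    rw [hc]; linarith
  set Lc : ℕ → ℕ → ℝ := fun i t => ∑ s ∈ Finset.range t, ℓ i s with hLc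
  set W : ℕ → ℝ := fun t => ∑ i ∈ Finset.range K, Real.exp (-(Lc i t)) with hW
  set P : ℕ → ℝ := fun t => ∑ i ∈ Finset.range K, pOf K (fun j => Lc j t) i * ℓ i t with hP
  have hWpos : ∀ t, 0 < W t := fun t => sumW_pos K hK _
  have hstep : ∀ t, t < T → W (t+1) ≤ W t * Real.exp (-(c * P t)) := by
    intro t ht
    have hWP : ∑ i ∈ Finset.range K, Real.exp (-(Lc i t)) * ℓ i t = W t * P t := by
      rw [hP, Finset.mul_sum]
      refine Finset.sum_congr rfl (fun i hi => ?_)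
      rw [pOf]
      have hWt : (∑ j ∈ Finset.range K, Real.exp (-(Lc j t))) = W t := rfl
      rw [hWt, div_mul_eq_mul_div, mul_div_assoc', mul_div_cancel_left₀ _ (ne_of_gt (hWpos t))]
    have h1 : W (t+1) ≤ W t - c * (W t * P t) := by
      rw [← hWP, hW]
      have : ∀ i ∈ Finset.range K,
          Real.exp (-(Lc i (t+1))) ≤ Real.exp (-(Lc i t)) * (1 - c * ℓ i t) := by
        intro i hi
        have hLsucc : Lc i (t+1) = Lc i t + ℓ i t := Finset.sum_range_succ _ _
        rw [hLsucc, neg_add, Real.exp_add]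
        refine mul_le_mul_of_nonneg_left ?_ (Real.exp_nonneg _)
        obtain ⟨h0i, h1i⟩ := hℓ i (Finset.mem_range.1 hi) t ht
        exact exp_neg_chord h0i h1i
      calc ∑ i ∈ Finset.range K, Real.exp (-(Lc i (t+1)))
          ≤ ∑ i ∈ Finset.range K, Real.exp (-(Lc i t)) * (1 - c * ℓ i t) :=
            Finset.sum_le_sum this
        _ = (∑ i ∈ Finset.range K, Real.exp (-(Lc i t)))
            - c * ∑ i ∈ Finset.range K, Real.exp (-(Lc i t)) * ℓ i t := by
            rw [Finset.mul_sum, ← Finset.sum_sub_distrib]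
            exact Finset.sum_congr rfl (fun i _ => by ring)
    have h2 : W t - c * (W t * P t) = W t * (1 - c * P t) := by ring
    have h3 : 1 - c * P t ≤ Real.exp (-(c * P t)) := by
      have := Real.add_one_le_exp (-(c * P t)); linarith
    calc W (t+1) ≤ W t * (1 - c * P t) := by rw [← h2]; exact h1
      _ ≤ W t * Real.exp (-(c * P t)) :=
          mul_le_mul_of_nonneg_left h3 (le_of_lt (hWpos t))
  have hind : ∀ n, n ≤ T →
      W n ≤ (K : ℝ) * Real.exp (-(c * ∑ t ∈ Finset.range n, P t)) := by
    intro n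
    induction n with
    | zero =>
      intro _
      simp [hW, hLc]
    | succ n ih =>
      intro hn
      have hn' : n ≤ T := le_of_lt (Nat.lt_of_succ_le hn)
      calc W (n+1) ≤ W n * Real.exp (-(c * P n)) := hstep n (Nat.lt_of_succ_le hn)
        _ ≤ ((K:ℝ) * Real.exp (-(c * ∑ t ∈ Finset.range n, P t))) * Real.exp (-(c * P n)) :=
            mul_le_mul_of_nonneg_right (ih hn') (Real.exp_nonneg _)
        _ = (K:ℝ) * Real.exp (-(c * ∑ t ∈ Finset.range (n+1), P t)) := by
            rw [mul_assoc, ← Real.exp_add, Finset.sum_range_succ]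
            ring_nf
  have hfinal := hind T le_rfl
  have hlow : Real.exp (-(Lc i₀ T)) ≤ W T := by
    rw [hW]
    exact Finset.single_le_sum (f := fun i => Real.exp (-(Lc i T)))
      (fun i _ => Real.exp_nonneg _) (Finset.mem_range.2 hi₀)
  have hKpos : (0:ℝ) < K := by exact_mod_cast hK
  have hlog : -(Lc i₀ T) ≤ Real.log K + (-(c * ∑ t ∈ Finset.range T, P t)) := by
    have h := Real.log_le_log (Real.exp_pos _) (le_trans hlow hfinal)
    rwa [Real.log_exp, Real.log_mul (ne_of_gt hKpos) (ne_of_gt (Real.exp_pos _)),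
      Real.log_exp] at h
  have hPsum : 0 ≤ ∑ t ∈ Finset.range T, P t := by
    refine Finset.sum_nonneg (fun t ht => ?_)
    refine Finset.sum_nonneg (fun i hi => ?_)
    have hp : 0 ≤ pOf K (fun j => Lc j t) i :=
      div_nonneg (Real.exp_nonneg _) (le_of_lt (sumW_pos K hK _))
    exact mul_nonneg hp (hℓ i (Finset.mem_range.1 hi) t (Finset.mem_range.1 ht)).1
  have hL0 : 0 ≤ Lc i₀ T :=
    Finset.sum_nonneg (fun s hs => (hℓ i₀ hi₀ s (Finset.mem_range.1 hs)).1)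
  have hfin : c * ∑ t ∈ Finset.range T, P t ≤ Real.log K + Lc i₀ T := by linarith
  have h2 : (1/2) * ∑ t ∈ Finset.range T, P t ≤ Real.log K + Lc i₀ T :=
    le_trans (mul_le_mul_of_nonneg_right hchalf hPsum) hfin
  rw [hLc] at h2
  linarith

/-! ### Bridging history-based and sequence-based quantities -/

lemma histPM_seq (v m : ℕ → ℝ) (t : ℕ) :
    histPM t (fun s : Fin t => (v s, m s)) = seqPM m t := by
  unfold histPM seqPM
  by_cases ht : 0 < t
  · rw [dif_pos ht, if_neg (by omega)]
  · rw [dif_neg ht, if_pos (by omega)]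

lemma histPMs_seq (v m : ℕ → ℝ) (t : ℕ) (s : Fin t) :
    histPMs t (fun u : Fin t => (v u, m u)) s = seqPM m s := by
  unfold histPMs seqPM
  by_cases hs : 0 < (s : ℕ)
  · rw [dif_pos hs, if_neg (by omega)]
  · rw [dif_neg hs, if_pos (by omega)]

lemma cumLoss_seq (v m : ℕ → ℝ) (t : ℕ) :
    cumLoss t (fun s : Fin t => (v s, m s)) = seqCum v m t := by
  funext i
  unfold cumLoss seqCum
  calc (∑ s : Fin t, stepLoss (epsOf i)
          (histPMs t (fun u : Fin t => (v u, m u)) s)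
          ((fun u : Fin t => (v u, m u)) s).1 ((fun u : Fin t => (v u, m u)) s).2)
      = ∑ s : Fin t, seqLoss v m i (s : ℕ) :=
        Finset.sum_congr rfl (fun s _ => by simp only [seqLoss, histPMs_seq])
    _ = ∑ s ∈ Finset.range t, seqLoss v m i s :=
        Fin.sum_univ_eq_sum_range (fun s => seqLoss v m i s) t

/-! ### The policy -/

open MeasureTheory in
@[reducible] noncomputable def hedgePolicy (T : ℕ) : BidPolicy T where
  Ω := ℝ
  instMS := inferInstance
  μ := MeasureTheory.volume.restrict (Set.Icc 0 1)
  isProb := by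
    constructor
    rw [MeasureTheory.Measure.restrict_apply_univ, Real.volume_Icc]
    norm_num
  bid := fun t h v ω => hedgeBid (T + 2) t h v ω
  bid_mem := fun t h v ω => hedgeBid_mem _ _ _ _ _
  bid_measurable := fun t => measurable_hedgeBid _ _

open MeasureTheory in
set_option maxHeartbeats 1000000 in
lemma expRegret_hedge (T : ℕ) (v m : ℕ → ℝ) :
    (hedgePolicy T).expRegret v m
      = ∑ t ∈ Finset.range T, ∑ i ∈ Finset.range (T + 2),
          pOf (T + 2) (seqCum v m t) i * seqLoss v m i t := by
  classical
  have hK : 0 < T + 2 := by omega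
  -- the integrand coincides on Ico 0 1 with a sum of indicators
  have hpt : ∀ (t : ℕ), ∀ ω ∈ Set.Ico (0:ℝ) 1,
      (max (v t - m t) 0 - fpaReward ((hedgePolicy T).bids v m t ω) (v t) (m t))
        = ∑ i ∈ Finset.range (T + 2),
            (Set.Ico (cumOf (T+2) (seqCum v m t) i)
              (cumOf (T+2) (seqCum v m t) (i+1))).indicator
              (fun _ => seqLoss v m i t) ω := by
    intro t ω hω
    obtain ⟨i₀, hi₀K, hcond⟩ := hedge_interval_exists (T+2) hK (seqCum v m t) hω.1 hω.2
    have hbid : (hedgePolicy T).bids v m t ω = bidOf (epsOf i₀) (seqPM m t) (v t) := by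
      show hedgeBid (T+2) t (fun s : Fin t => (v s, m s)) (v t) ω = _
      rw [hedgeBid, cumLoss_seq v m t, histPM_seq v m t,
        Finset.sum_eq_single_of_mem i₀ (Finset.mem_range.2 hi₀K)
          (fun j _ hji => if_neg
            (fun hcondj => hji (hedge_interval_unique (T+2) _ ω hcondj hcond))),
        if_pos hcond]
    rw [hbid,
      Finset.sum_eq_single_of_mem i₀ (Finset.mem_range.2 hi₀K)
        (fun j _ hji => Set.indicator_of_notMem
          (fun hmem => hji (hedge_interval_unique (T+2) _ ω (Set.mem_Ico.1 hmem) hcond)) _),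
      Set.indicator_of_mem (Set.mem_Ico.2 hcond)]
    rfl
  haveI hfin : IsFiniteMeasure (volume.restrict (Set.Ico (0:ℝ) 1)) := by
    constructor
    rw [MeasureTheory.Measure.restrict_apply_univ, Real.volume_Ico]
    exact ENNReal.ofReal_lt_top
  have hint : ∀ t i, Integrable
      ((Set.Ico (cumOf (T+2) (seqCum v m t) i)
        (cumOf (T+2) (seqCum v m t) (i+1))).indicator (fun _ => seqLoss v m i t))
      (volume.restrict (Set.Ico (0:ℝ) 1)) := by
    intro t i
    exact (integrable_const _).indicator measurableSet_Ico
  have hμ : (hedgePolicy T).μ = volume.restrict (Set.Ico (0:ℝ) 1) := by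
    show volume.restrict (Set.Icc (0:ℝ) 1) = _
    exact (Measure.restrict_congr_set Ico_ae_eq_Icc).symm
  rw [BidPolicy.expRegret, hμ]
  have hae : ∀ᵐ ω ∂(volume.restrict (Set.Ico (0:ℝ) 1)),
      (∑ t ∈ Finset.range T,
        (max (v t - m t) 0 - fpaReward ((hedgePolicy T).bids v m t ω) (v t) (m t)))
      = ∑ t ∈ Finset.range T, ∑ i ∈ Finset.range (T + 2),
          (Set.Ico (cumOf (T+2) (seqCum v m t) i)
            (cumOf (T+2) (seqCum v m t) (i+1))).indicator
            (fun _ => seqLoss v m i t) ω :=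
    ae_restrict_of_forall_mem measurableSet_Ico
      (fun ω hω => Finset.sum_congr rfl (fun t _ => hpt t ω hω))
  rw [integral_congr_ae hae,
    integral_finset_sum _ (fun t _ => integrable_finset_sum _ (fun i _ => hint t i))]
  refine Finset.sum_congr rfl (fun t _ => ?_)
  rw [integral_finset_sum _ (fun i _ => hint t i)]
  refine Finset.sum_congr rfl (fun i hi => ?_)
  have hsub : Set.Ico (cumOf (T+2) (seqCum v m t) i) (cumOf (T+2) (seqCum v m t) (i+1))
      ⊆ Set.Ico (0:ℝ) 1 := by
    refine Set.Ico_subset_Ico ?_ ?_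
    · rw [← cumOf_zero (T+2) (seqCum v m t)]
      exact cumOf_mono _ _ (Nat.zero_le _)
    · rw [← cumOf_K (T+2) hK (seqCum v m t)]
      exact cumOf_mono _ _ (by have := Finset.mem_range.1 hi; omega : i + 1 ≤ T + 2)
  rw [setIntegral_indicator measurableSet_Ico,
    Set.inter_eq_self_of_subset_right hsub, setIntegral_const, measureReal_def, Real.volume_Ico,
    ENNReal.toReal_ofReal (sub_nonneg.2 (cumOf_mono _ _ (Nat.le_succ i))),
    cumOf_succ, smul_eq_mul]
  ring

/-! ### Expert regret bounds -/

lemma epsOf_nonneg (i : ℕ) : 0 ≤ epsOf i := by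
  unfold epsOf; split
  · exact le_refl 0
  · positivity

lemma seqPM_mem (m : ℕ → ℝ) (T : ℕ) (hm : ∀ t < T, m t ∈ Set.Icc (0:ℝ) 1)
    {s : ℕ} (hs : s < T) : seqPM m s ∈ Set.Icc (0:ℝ) 1 := by
  unfold seqPM; split
  · norm_num
  · exact hm (s-1) (by omega)

lemma seqLoss_mem (v m : ℕ → ℝ) (T : ℕ)
    (hv : ∀ t < T, v t ∈ Set.Icc (0:ℝ) 1) (hm : ∀ t < T, m t ∈ Set.Icc (0:ℝ) 1)
    (i : ℕ) {s : ℕ} (hs : s < T) : seqLoss v m i s ∈ Set.Icc (0:ℝ) 1 :=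
  stepLoss_mem (epsOf_nonneg i) (seqPM_mem m T hm hs).1 (hv s hs) (hm s hs)

lemma expert_sum_bound (v m : ℕ → ℝ) (T : ℕ) (hT : 2 ≤ T)
    (hv : ∀ t < T, v t ∈ Set.Icc (0:ℝ) 1) (hm : ∀ t < T, m t ∈ Set.Icc (0:ℝ) 1) (i : ℕ) :
    ∑ s ∈ Finset.range T, seqLoss v m i s
      ≤ 1 + ∑ s ∈ Finset.range (T-1),
          (epsOf i + |m (s+1) - m s| + (if epsOf i < |m (s+1) - m s| then 1 else 0)) := by
  have hshift := Finset.sum_range_succ' (fun s => seqLoss v m i s) (T-1)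
  rw [show T - 1 + 1 = T by omega] at hshift
  rw [hshift]
  have h0 : seqLoss v m i 0 ≤ 1 := (seqLoss_mem v m T hv hm i (by omega)).2
  have hterm : ∀ s ∈ Finset.range (T-1),
      seqLoss v m i (s+1)
        ≤ epsOf i + |m (s+1) - m s| + (if epsOf i < |m (s+1) - m s| then 1 else 0) := by
    intro s hs
    have hsT : s + 1 < T := by have := Finset.mem_range.1 hs; omega
    have hpm : seqPM m (s+1) = m s := by
      unfold seqPM; rw [if_neg (by omega), Nat.add_sub_cancel]
    have := stepLoss_bound (ε := epsOf i) (pm := m s) (v := v (s+1)) (m := m (s+1))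
      (epsOf_nonneg i) (hm s (by omega)).1 (hm s (by omega)).2 (hv (s+1) hsT) (hm (s+1) hsT)
    rw [seqLoss, hpm]
    exact this
  calc (∑ s ∈ Finset.range (T-1), seqLoss v m i (s+1)) + seqLoss v m i 0
      ≤ (∑ s ∈ Finset.range (T-1),
          (epsOf i + |m (s+1) - m s| + (if epsOf i < |m (s+1) - m s| then 1 else 0))) + 1 :=
        add_le_add (Finset.sum_le_sum hterm) h0
    _ = 1 + _ := by ring

set_option maxHeartbeats 2000000 in
/-- Best-of-both-worlds: there is a single policy whose expected dynamic regret on every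
sequence in `[0,1]²` with `V_T ≥ log T` is `O(min {√(T·V_T), L_T})` up to
polylogarithmic factors in `T`. -/
theorem best_of_both_worlds_upper_bound :
    ∃ C : ℝ, 0 < C ∧ ∃ k : ℕ, ∀ T : ℕ, 2 ≤ T → ∃ π : BidPolicy T,
      ∀ v m : ℕ → ℝ,
        (∀ t < T, v t ∈ Set.Icc (0:ℝ) 1) → (∀ t < T, m t ∈ Set.Icc (0:ℝ) 1) →
        Real.log T ≤ totalVariation m T →
        π.expRegret v m ≤
          C * min (Real.sqrt ((T : ℝ) * totalVariation m T)) (numSwitches m T) *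
            (1 + Real.log T) ^ k := by
  classical
  refine ⟨100, by norm_num, 0, fun T hT => ⟨hedgePolicy T, fun v m hv hm hV => ?_⟩⟩
  set V := totalVariation m T with hVdef
  set L := numSwitches m T with hLdef
  have hTR : (2:ℝ) ≤ (T:ℝ) := by exact_mod_cast hT
  have hT0 : (0:ℝ) < T := by linarith
  have hlog2 : (0.5:ℝ) ≤ Real.log 2 := by have := Real.log_two_gt_d9; linarith
  have hlogT2 : Real.log 2 ≤ Real.log T := Real.log_le_log (by norm_num) hTR
  have hlt0 : (0:ℝ) < Real.log T := by linarith
  have hltV : Real.log T ≤ V := hV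
  have hV0 : (0:ℝ) < V := lt_of_lt_of_le hlt0 hltV
  have habs1 : ∀ s ∈ Finset.range (T-1), |m (s+1) - m s| ≤ 1 := by
    intro s hs
    have hsT : s + 1 < T := by have := Finset.mem_range.1 hs; omega
    have h1 := hm (s+1) hsT
    have h2 := hm s (by omega)
    exact abs_le.2 ⟨by linarith [h1.1, h2.2], by linarith [h1.2, h2.1]⟩
  have hVL : V ≤ L := by
    rw [hVdef, hLdef, totalVariation, numSwitches]
    refine Finset.sum_le_sum (fun s hs => ?_)
    by_cases he : m (s+1) = m s
    · simp [he]
    · rw [if_pos he]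
      exact habs1 s hs
  have hVT : V ≤ (T:ℝ) - 1 := by
    rw [hVdef, totalVariation]
    calc (∑ s ∈ Finset.range (T-1), |m (s+1) - m s|)
        ≤ (Finset.range (T-1)).card • (1:ℝ) := Finset.sum_le_card_nsmul _ _ 1 habs1
      _ = ((T-1 : ℕ) : ℝ) := by simp
      _ ≤ (T:ℝ) - 1 := by
          rw [Nat.cast_sub (by omega)]; norm_num
  have hL0 : (0:ℝ) < L := lt_of_lt_of_le hV0 hVL
  have hltL : Real.log T ≤ L := le_trans hltV hVL
  set S := Real.sqrt ((T:ℝ) * V) with hSdef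
  have hS1 : (1:ℝ) ≤ S := Real.one_le_sqrt.2 (by nlinarith)
  have hltS : Real.log T ≤ S := by
    rw [hSdef, Real.le_sqrt hlt0.le (by positivity)]
    have hlogT : Real.log T ≤ (T:ℝ) := le_trans (Real.log_le_sub_one_of_pos hT0) (by linarith)
    nlinarith
  -- losses in [0,1]
  have hℓ : ∀ i < T+2, ∀ s < T, seqLoss v m i s ∈ Set.Icc (0:ℝ) 1 :=
    fun i _ s hs => seqLoss_mem v m T hv hm i hs
  have hmaster : ∀ i < T + 2,
      (∑ t ∈ Finset.range T, ∑ i ∈ Finset.range (T+2),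
          pOf (T+2) (seqCum v m t) i * seqLoss v m i t)
        ≤ 2 * (Real.log (↑(T+2)) + ∑ t ∈ Finset.range T, seqLoss v m i t) :=
    fun i hi => hedge_master (T+2) T (by omega) (seqLoss v m) hℓ i hi
  -- expert 0 (zero margin): loss bounded by switches
  have hR0 : (∑ s ∈ Finset.range T, seqLoss v m 0 s) ≤ 1 + 2 * L := by
    refine le_trans (expert_sum_bound v m T hT hv hm 0) ?_
    have heps0 : epsOf 0 = 0 := by unfold epsOf; rw [if_pos rfl]
    have hterm : ∀ s ∈ Finset.range (T-1),
        (epsOf 0 + |m (s+1) - m s| + (if epsOf 0 < |m (s+1) - m s| then 1 else 0))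
          ≤ 2 * (if m (s+1) ≠ m s then 1 else 0) := by
      intro s hs
      rw [heps0]
      by_cases he : m (s+1) = m s
      · simp [he]
      · rw [if_pos he, if_pos (abs_pos.2 (sub_ne_zero.2 he))]
        have := habs1 s hs
        linarith
    have hsum := Finset.sum_le_sum hterm
    rw [← Finset.mul_sum] at hsum
    rw [hLdef, numSwitches]
    linarith
  -- the tuned expert
  set ε := Real.sqrt (V / T) with hεdef
  have hε0 : 0 < ε := Real.sqrt_pos.2 (div_pos hV0 hT0)
  have hε1 : ε < 1 := by
    rw [hεdef, show (1:ℝ) = Real.sqrt 1 from Real.sqrt_one.symm]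
    exact Real.sqrt_lt_sqrt (by positivity) (by rw [div_lt_one hT0]; linarith)
  have hTε : (T:ℝ) * ε = S := by
    rw [hεdef, hSdef, show (T:ℝ) * V = (T:ℝ)^2 * (V / T) by field_simp,
      Real.sqrt_mul (sq_nonneg _), Real.sqrt_sq hT0.le]
  have hVε : V / ε = S := by
    rw [hεdef, hSdef, Real.sqrt_div hV0.le, div_div_eq_mul_div, mul_comm (T:ℝ) V,
      Real.sqrt_mul hV0.le, mul_div_right_comm, Real.div_sqrt]
  have h4T : 2 * (T:ℝ) ≤ 4 ^ T := by
    have h2p : (T:ℝ) < 2 ^ T := by exact_mod_cast (Nat.lt_two_pow_self (n := T))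
    have h2p' : (2:ℝ) ≤ 2 ^ T := by
      calc (2:ℝ) = 2 ^ 1 := (pow_one 2).symm
        _ ≤ 2 ^ T := pow_le_pow_right₀ (by norm_num) (by omega)
    calc 2 * (T:ℝ) ≤ 2 ^ T * (T:ℝ) := by nlinarith
      _ ≤ 2 ^ T * 2 ^ T := by nlinarith
      _ = 4 ^ T := by rw [show (4:ℝ) = 2 * 2 by norm_num, mul_pow]
  have h2T : (2:ℝ)⁻¹ ^ T ≤ ε := by
    rw [hεdef, Real.le_sqrt (by positivity) (by positivity)]
    have heq : ((2:ℝ)⁻¹ ^ T) ^ 2 = ((4:ℝ) ^ T)⁻¹ := by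
      rw [← pow_mul, show (4:ℝ) = 2 ^ 2 by norm_num, ← pow_mul, mul_comm 2 T, inv_pow]
    rw [heq]
    have h1 : ((4:ℝ) ^ T)⁻¹ ≤ (2 * (T:ℝ))⁻¹ := inv_anti₀ (by positivity) h4T
    have h2 : (2 * (T:ℝ))⁻¹ ≤ V / T := by
      rw [show (2 * (T:ℝ))⁻¹ = (1/2) / T by field_simp]
      gcongr
      linarith
    linarith
  have hexn : ∃ n, (2:ℝ)⁻¹ ^ n ≤ ε := ⟨T, h2T⟩
  set n₀ := Nat.find hexn with hn₀def
  have hn₀T : n₀ ≤ T := Nat.find_le h2T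
  have hspec : (2:ℝ)⁻¹ ^ n₀ ≤ ε := Nat.find_spec hexn
  have hn₀pos : 0 < n₀ := by
    rcases Nat.eq_zero_or_pos n₀ with h0 | h
    · exfalso
      rw [h0, pow_zero] at hspec
      linarith
    · exact h
  have hmin : ε < (2:ℝ)⁻¹ ^ (n₀ - 1) := not_le.1 (Nat.find_min hexn (by omega))
  set εi := (2:ℝ)⁻¹ ^ n₀ with hεidef
  have hεi0 : 0 < εi := by rw [hεidef]; positivity
  have hεile : εi ≤ ε := hspec
  have hpow : (2:ℝ)⁻¹ ^ (n₀ - 1 + 1) = (2:ℝ)⁻¹ ^ (n₀ - 1) * 2⁻¹ := pow_succ _ _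
  rw [show n₀ - 1 + 1 = n₀ by omega] at hpow
  have hhalfε : ε / 2 < εi := by
    rw [hεidef]
    rw [hεidef] at hεi0
    linarith [hpow, hmin]
  have hepsOf : epsOf (n₀ + 1) = εi := by
    unfold epsOf
    rw [if_neg (Nat.succ_ne_zero n₀), Nat.add_sub_cancel]
  -- tuned expert bound
  have hRi : (∑ s ∈ Finset.range T, seqLoss v m (n₀+1) s) ≤ 1 + 4 * S := by
    refine le_trans (expert_sum_bound v m T hT hv hm (n₀+1)) ?_
    rw [hepsOf]
    have hsplit : ∑ s ∈ Finset.range (T-1),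
        (εi + |m (s+1) - m s| + (if εi < |m (s+1) - m s| then 1 else 0))
        = ((∑ s ∈ Finset.range (T-1), εi) + (∑ s ∈ Finset.range (T-1), |m (s+1) - m s|))
          + ∑ s ∈ Finset.range (T-1), (if εi < |m (s+1) - m s| then (1:ℝ) else 0) := by
      rw [← Finset.sum_add_distrib, ← Finset.sum_add_distrib]
    rw [hsplit]
    have hVsum : (∑ s ∈ Finset.range (T-1), |m (s+1) - m s|) = V := by
      rw [hVdef]; rfl
    have h1 : (∑ s ∈ Finset.range (T-1), εi) ≤ S := by
      rw [Finset.sum_const, Finset.card_range, nsmul_eq_mul]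
      have hcast : ((T-1:ℕ):ℝ) ≤ (T:ℝ) := by
        rw [Nat.cast_sub (by omega)]; linarith
      calc ((T-1:ℕ):ℝ) * εi ≤ (T:ℝ) * ε :=
            mul_le_mul hcast hεile hεi0.le hT0.le
        _ = S := hTε
    have h3 : (∑ s ∈ Finset.range (T-1), (if εi < |m (s+1) - m s| then (1:ℝ) else 0))
        ≤ 2 * S := by
      have hterm : ∀ s ∈ Finset.range (T-1),
          (if εi < |m (s+1) - m s| then (1:ℝ) else 0) ≤ |m (s+1) - m s| / εi := by
        intro s hs
        split
        · rename_i hlt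
          rw [le_div_iff₀ hεi0]
          linarith
        · positivity
      calc (∑ s ∈ Finset.range (T-1), (if εi < |m (s+1) - m s| then (1:ℝ) else 0))
          ≤ ∑ s ∈ Finset.range (T-1), |m (s+1) - m s| / εi := Finset.sum_le_sum hterm
        _ = V / εi := by rw [← Finset.sum_div, hVsum]
        _ ≤ V / (ε/2) := div_le_div_of_nonneg_left hV0.le (by positivity) (le_of_lt hhalfε)
        _ = 2 * (V / ε) := by
            rw [div_div_eq_mul_div]
            ring
        _ = 2 * S := by rw [hVε]
    have hVS : V ≤ S := by
      rw [hSdef, Real.le_sqrt hV0.le (by positivity)]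
      nlinarith
    rw [hVsum]
    linarith
  -- combine
  have hlogK : Real.log (↑(T+2)) ≤ 2 * Real.log T := by
    have hcast : ((T+2:ℕ):ℝ) = (T:ℝ) + 2 := by push_cast; ring
    rw [hcast]
    calc Real.log ((T:ℝ)+2) ≤ Real.log ((T:ℝ)^2) :=
          Real.log_le_log (by linarith) (by nlinarith)
      _ = 2 * Real.log T := by
          rw [Real.log_pow]; norm_num
  rw [expRegret_hedge T v m, pow_zero, mul_one]
  have hb0 := hmaster 0 (by omega)
  have hbi := hmaster (n₀+1) (by omega)
  rcases le_total S L with hSL | hSL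
  · rw [min_eq_left hSL]
    calc (∑ t ∈ Finset.range T, ∑ i ∈ Finset.range (T+2),
            pOf (T+2) (seqCum v m t) i * seqLoss v m i t)
        ≤ 2 * (Real.log (↑(T+2)) + ∑ t ∈ Finset.range T, seqLoss v m (n₀+1) t) := hbi
      _ ≤ 100 * S := by linarith [hlogK, hRi, hltS, hS1]
  · rw [min_eq_right hSL]
    calc (∑ t ∈ Finset.range T, ∑ i ∈ Finset.range (T+2),
            pOf (T+2) (seqCum v m t) i * seqLoss v m i t)
        ≤ 2 * (Real.log (↑(T+2)) + ∑ t ∈ Finset.range T, seqLoss v m 0 t) := hb0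
      _ ≤ 100 * L := by linarith [hlogK, hR0, hltL, hL0, hlogT2, hlog2, hltV, hVL]
end
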